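/- arXiv:0907.0884 — 9 statements merged into one kernel-verified Lean document; each statement's English description precedes it below -/
import Mathlib

section
/- Let x₁, …, xₙ be mutually independent real-valued random variables and let v₁ < v₂ < ⋯ < v_m be fixed real numbers. For each i, let B_i = #{j ∈ {1, …, m} : v_j ≤ x_i} be the predecessor index of x_i in the list (v₁, …, v_m), and let π be the random permutation of {1, …, n} that sorts the pairs (x_i, i) in increasing lexicographic order (i.e., π(1), …, π(n) lists the indices so that (x_{π(1)}, π(1)) < (x_{π(2)}, π(2)) < ⋯ lexicographically). Then ∑_{i=1}^n H(B_i) ≤ H(π) + n + m. -/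
open MeasureTheory ProbabilityTheory Finset

section RealLemmas

/-- Gibbs' inequality with natural log. -/
lemma gibbs_log {α : Type*} [Fintype α] (p q : α → ℝ)
    (hp : ∀ a, 0 ≤ p a) (hps : ∑ a, p a = 1)
    (hq : ∀ a, 0 ≤ q a) (hqs : ∑ a, q a ≤ 1)
    (hpq : ∀ a, 0 < p a → 0 < q a) :
    ∑ a, p a * Real.log (1 / p a) ≤ ∑ a, p a * Real.log (1 / q a) := by
  classical
  have key : ∀ a, p a * Real.log (1 / p a) - p a * Real.log (1 / q a)
      ≤ (if 0 < p a then q a else 0) - p a := by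
    intro a
    by_cases h : 0 < p a
    · have hq' := hpq a h
      rw [if_pos h]
      have e1 : p a * Real.log (1 / p a) - p a * Real.log (1 / q a)
          = p a * Real.log (q a / p a) := by
        rw [one_div, one_div, Real.log_inv, Real.log_inv, Real.log_div hq'.ne' h.ne']
        ring
      rw [e1]
      have hlog := Real.log_le_sub_one_of_pos (div_pos hq' h)
      calc p a * Real.log (q a / p a) ≤ p a * (q a / p a - 1) :=
            mul_le_mul_of_nonneg_left hlog h.le
        _ = q a - p a := by field_simp
    · have h0 : p a = 0 := le_antisymm (not_lt.1 h) (hp a)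
      simp [h0, if_neg h]
  have hsum := Finset.sum_le_sum (s := Finset.univ) (fun a _ => key a)
  rw [Finset.sum_sub_distrib, Finset.sum_sub_distrib] at hsum
  have h1 : ∑ a, (if 0 < p a then q a else 0) ≤ ∑ a, q a :=
    Finset.sum_le_sum (s := Finset.univ) (fun a _ => by split <;> simp [hq a])
  linarith

/-- Gibbs' inequality, base 2. -/
lemma gibbs {α : Type*} [Fintype α] (p q : α → ℝ)
    (hp : ∀ a, 0 ≤ p a) (hps : ∑ a, p a = 1)
    (hq : ∀ a, 0 ≤ q a) (hqs : ∑ a, q a ≤ 1)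
    (hpq : ∀ a, 0 < p a → 0 < q a) :
    ∑ a, p a * Real.logb 2 (1 / p a) ≤ ∑ a, p a * Real.logb 2 (1 / q a) := by
  have h := gibbs_log p q hp hps hq hqs hpq
  have e : ∀ r : ℝ, Real.logb 2 r = Real.log r * (Real.log 2)⁻¹ := fun r => by
    rw [Real.logb, div_eq_mul_inv]
  simp_rw [e, ← mul_assoc]
  rw [← Finset.sum_mul, ← Finset.sum_mul]
  have h2 : (0:ℝ) ≤ (Real.log 2)⁻¹ := inv_nonneg.2 (Real.log_nonneg one_le_two)
  exact mul_le_mul_of_nonneg_right h h2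

/-- Data processing: entropy of a function of a variable is at most entropy of the variable. -/
lemma H_comp_le {α β : Type*} [Fintype α] [Fintype β] [DecidableEq β]
    (p : α → ℝ) (hp : ∀ a, 0 ≤ p a) (f : α → β) :
    ∑ b, (∑ a ∈ univ.filter (fun a => f a = b), p a) *
        Real.logb 2 (1 / ∑ a ∈ univ.filter (fun a => f a = b), p a)
      ≤ ∑ a, p a * Real.logb 2 (1 / p a) := by
  classical
  rw [← Finset.sum_fiberwise univ f (fun a => p a * Real.logb 2 (1 / p a))]
  refine Finset.sum_le_sum fun b _ => ?_
  set Q := ∑ a ∈ univ.filter (fun a => f a = b), p a with hQ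
  have hQ0 : 0 ≤ Q := Finset.sum_nonneg fun a _ => hp a
  rw [Finset.sum_mul]
  refine Finset.sum_le_sum fun a ha => ?_
  rcases eq_or_lt_of_le (hp a) with h0 | h0
  · simp [← h0]
  · have hpa_le : p a ≤ Q := Finset.single_le_sum (fun a _ => hp a) ha
    have hQpos : 0 < Q := lt_of_lt_of_le h0 hpa_le
    refine mul_le_mul_of_nonneg_left ?_ (hp a)
    exact (Real.logb_le_logb one_lt_two (by positivity) (by positivity)).2
      (one_div_le_one_div_of_le h0 hpa_le)

/-- Marginalization of a product distribution. -/
lemma marginal_prod {n : ℕ} {κ : Type*} [Fintype κ] [DecidableEq κ]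
    (p : Fin n → κ → ℝ) (hs : ∀ i, ∑ c, p i c = 1) (i : Fin n) (f : κ → ℝ) :
    ∑ b : Fin n → κ, (∏ j, p j (b j)) * f (b i) = ∑ c, p i c * f c := by
  classical
  set q : Fin n → κ → ℝ := fun j c => if j = i then p i c * f c else p j c with hq
  have step1 : ∀ b : Fin n → κ, (∏ j, p j (b j)) * f (b i) = ∏ j, q j (b j) := by
    intro b
    rw [← Finset.mul_prod_erase univ (fun j => q j (b j)) (Finset.mem_univ i),
        ← Finset.mul_prod_erase univ (fun j => p j (b j)) (Finset.mem_univ i)]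
    have : ∏ j ∈ univ.erase i, q j (b j) = ∏ j ∈ univ.erase i, p j (b j) :=
      Finset.prod_congr rfl fun j hj => by
        simp [hq, (Finset.mem_erase.1 hj).1]
    rw [this]; simp [hq]; ring
  simp_rw [step1]
  have := Finset.prod_univ_sum (fun _ : Fin n => (univ : Finset κ)) (fun j c => q j c)
  rw [Fintype.piFinset_univ] at this
  rw [← this]
  rw [← Finset.mul_prod_erase univ (fun j => ∑ c, q j c) (Finset.mem_univ i)]
  have h2 : ∏ j ∈ univ.erase i, ∑ c, q j c = 1 := by
    refine Finset.prod_eq_one fun j hj => ?_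
    have hji := (Finset.mem_erase.1 hj).1
    simp only [hq, if_neg hji]
    exact hs j
  rw [h2]; simp [hq]

/-- Entropy of an independent product equals sum of entropies. -/
lemma sum_H_prod {n : ℕ} {κ : Type*} [Fintype κ] [DecidableEq κ]
    (p : Fin n → κ → ℝ) (hp : ∀ i c, 0 ≤ p i c) (hs : ∀ i, ∑ c, p i c = 1) :
    ∑ i, ∑ c, p i c * Real.logb 2 (1 / p i c)
      = ∑ b : Fin n → κ, (∏ i, p i (b i)) * Real.logb 2 (1 / ∏ i, p i (b i)) := by
  classical
  have step1 : ∀ b : Fin n → κ,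
      (∏ i, p i (b i)) * Real.logb 2 (1 / ∏ i, p i (b i))
        = ∑ i, (∏ j, p j (b j)) * Real.logb 2 (1 / p i (b i)) := by
    intro b
    by_cases h : ∃ j, p j (b j) = 0
    · obtain ⟨j, hj⟩ := h
      have hprod : ∏ i, p i (b i) = 0 :=
        Finset.prod_eq_zero (Finset.mem_univ j) hj
      simp [hprod]
    · push_neg at h
      have hpos : ∀ j, 0 < p j (b j) := fun j => lt_of_le_of_ne (hp j (b j)) (Ne.symm (h j))
      have hprodpos : 0 < ∏ i, p i (b i) := Finset.prod_pos fun i _ => hpos i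
      have hlog : Real.logb 2 (1 / ∏ i, p i (b i)) = ∑ i, Real.logb 2 (1 / p i (b i)) := by
        simp only [one_div, Real.logb, Real.log_inv]
        rw [Real.log_prod (s := univ) (fun i _ => (hpos i).ne')]
        simp [neg_div, Finset.sum_div]
      rw [hlog, Finset.mul_sum]
  simp_rw [step1]
  have hcomm : ∑ b : Fin n → κ, ∑ i, (∏ j, p j (b j)) * Real.logb 2 (1 / p i (b i))
      = ∑ i, ∑ b : Fin n → κ, (∏ j, p j (b j)) * Real.logb 2 (1 / p i (b i)) :=
    Finset.sum_comm
  rw [hcomm]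
  refine Finset.sum_congr rfl fun i _ => ?_
  exact (marginal_prod p hs i (fun c => Real.logb 2 (1 / p i c))).symm
end RealLemmas

section ProbLemmas

variable {Ω : Type*} [MeasurableSpace Ω] (μ : Measure Ω) [IsProbabilityMeasure μ]

lemma pm_sum_one {α : Type*} [Fintype α] (X : Ω → α)
    (hX : ∀ a, MeasurableSet {ω | X ω = a}) :
    ∑ a, (μ {ω | X ω = a}).toReal = 1 := by
  classical
  have hpre : ∀ a, X ⁻¹' {a} = {ω | X ω = a} := fun a => by
    ext ω; simp [Set.mem_preimage]
  have h := MeasureTheory.sum_measure_preimage_singleton (μ := μ) (f := X) univ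
    (fun a _ => by rw [hpre]; exact hX a)
  simp only [hpre] at h
  rw [← ENNReal.toReal_sum (fun a _ => measure_ne_top μ _), h]
  simp

lemma pm_marginal {α β : Type*} [Fintype α] [Fintype β] [DecidableEq β]
    (X : Ω → α) (hX : ∀ a, MeasurableSet {ω | X ω = a}) (f : α → β) (b : β) :
    (μ {ω | f (X ω) = b}).toReal
      = ∑ a ∈ univ.filter (fun a => f a = b), (μ {ω | X ω = a}).toReal := by
  classical
  have hpre : ∀ a : α, X ⁻¹' {a} = {ω | X ω = a} := fun a => by
    ext ω; simp [Set.mem_preimage]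
  have h := MeasureTheory.sum_measure_preimage_singleton (μ := μ) (f := X)
    (univ.filter (fun a => f a = b)) (fun a _ => by rw [hpre]; exact hX a)
  have hset : X ⁻¹' ↑(univ.filter (fun a => f a = b)) = {ω | f (X ω) = b} := by
    ext ω; simp [Set.mem_preimage]
  rw [hset] at h
  rw [← h, ENNReal.toReal_sum (fun a _ => measure_ne_top μ _)]
  exact Finset.sum_congr rfl fun a _ => by rw [hpre]

end ProbLemmas

section Counting

/-- Two strictly monotone maps from `Fin k` with the same image coincide. -/
lemma strictMono_image_eq {α : Type*} [LinearOrder α] {k : ℕ} {f g : Fin k → α}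
    (hf : StrictMono f) (hg : StrictMono g)
    (h : Finset.univ.image f = Finset.univ.image g) : f = g := by
  classical
  have hcard : (Finset.univ.image f).card = k := by
    rw [Finset.card_image_of_injective _ hf.injective, Finset.card_univ, Fintype.card_fin]
  have h1 := Finset.orderEmbOfFin_unique hcard
    (fun x => Finset.mem_image_of_mem f (Finset.mem_univ x)) hf
  have h2 := Finset.orderEmbOfFin_unique hcard
    (fun x => h ▸ Finset.mem_image_of_mem g (Finset.mem_univ x)) hg
  funext j
  rw [congrFun h1 j, congrFun h2 j]

lemma count_mono_le {n m : ℕ} (σ : Equiv.Perm (Fin n))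
    [D : ∀ b : Fin n → Fin (m+1), Decidable (Monotone (fun j => b (σ j)))] :
    ∑ b : Fin n → Fin (m+1), (if Monotone (fun j => b (σ j)) then (1:ℝ) else 0)
      ≤ 2 ^ (n + m) := by
  classical
  rw [Finset.sum_boole]
  have hcard : ((univ : Finset (Fin n → Fin (m+1))).filter
      (fun b => Monotone (fun j => b (σ j)))).card ≤ 2 ^ (n + m) := by
    have hinj : ∀ b₁ ∈ (univ : Finset (Fin n → Fin (m+1))).filter
        (fun b => Monotone (fun j => b (σ j))),
        ∀ b₂ ∈ (univ : Finset (Fin n → Fin (m+1))).filter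
        (fun b => Monotone (fun j => b (σ j))),
        (univ.image (fun j : Fin n => (b₁ (σ j) : ℕ) + j))
          = (univ.image (fun j : Fin n => (b₂ (σ j) : ℕ) + j)) → b₁ = b₂ := by
      intro b₁ hb₁ b₂ hb₂ himg
      have hm₁ : Monotone (fun j => b₁ (σ j)) := (Finset.mem_filter.1 hb₁).2
      have hm₂ : Monotone (fun j => b₂ (σ j)) := (Finset.mem_filter.1 hb₂).2
      have hsm : ∀ (b : Fin n → Fin (m+1)), Monotone (fun j => b (σ j)) →
          StrictMono (fun j : Fin n => (b (σ j) : ℕ) + j) := by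
        intro b hb j k hjk
        have h1 : (b (σ j) : ℕ) ≤ (b (σ k) : ℕ) := hb hjk.le
        exact Nat.add_lt_add_of_le_of_lt h1 hjk
      have hfun := strictMono_image_eq (hsm b₁ hm₁) (hsm b₂ hm₂) himg
      funext i
      have := congrFun hfun (σ.symm i)
      simp only [Equiv.apply_symm_apply] at this
      exact Fin.ext (by omega)
    have hmaps : ∀ b ∈ (univ : Finset (Fin n → Fin (m+1))).filter
        (fun b => Monotone (fun j => b (σ j))),
        (univ.image (fun j : Fin n => (b (σ j) : ℕ) + j))
          ∈ (Finset.range (n + m)).powerset := by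
      intro b _
      rw [Finset.mem_powerset]
      intro c hc
      rw [Finset.mem_image] at hc
      obtain ⟨j, _, rfl⟩ := hc
      have h1 : (b (σ j) : ℕ) ≤ m := Fin.is_le _
      have h2 : (j : ℕ) < n := j.isLt
      rw [Finset.mem_range]; omega
    have := Finset.card_le_card_of_injOn _ hmaps (fun b₁ hb₁ b₂ hb₂ h =>
      hinj b₁ hb₁ b₂ hb₂ h)
    rwa [Finset.card_powerset, Finset.card_range] at this
  calc ((univ.filter (fun b : Fin n → Fin (m+1) =>
          Monotone (fun j => b (σ j)))).card : ℝ)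
      ≤ ((2 ^ (n + m) : ℕ) : ℝ) := Nat.cast_le.2 hcard
    _ = 2 ^ (n + m) := by push_cast; ring

end Counting

noncomputable def shannonEntropy {Ω α : Type*} [MeasurableSpace Ω] [Fintype α]
    (μ : Measure Ω) (X : Ω → α) : ℝ :=
  ∑ x : α, (μ {ω | X ω = x}).toReal * Real.logb 2 (1 / (μ {ω | X ω = x}).toReal)

/-- For mutually independent reals `x₁, …, xₙ` and fixed `v₁ < ⋯ < v_m`, letting
`B i` be the predecessor index of `x i` in the `v`-list and `π` the permutation sorting
the pairs `(x_i, i)` lexicographically, we have `∑ᵢ H(B i) ≤ H(π) + n + m`. -/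
theorem stmt3 {Ω : Type*} [MeasurableSpace Ω] (μ : Measure Ω) [IsProbabilityMeasure μ]
    (n m : ℕ) (x : Fin n → Ω → ℝ) (hx : ∀ i, Measurable (x i))
    (hind : iIndepFun x μ)
    (v : Fin m → ℝ) (hv : StrictMono v)
    (π : Ω → Equiv.Perm (Fin n))
    (hπ : ∀ ω, StrictMono (fun j : Fin n => toLex (x (π ω j) ω, ((π ω j : ℕ)))))
    (B : Fin n → Ω → Fin (m + 1))
    (hB : ∀ i ω, (B i ω : ℕ) = (Finset.univ.filter (fun j => v j ≤ x i ω)).card) :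
    ∑ i, shannonEntropy μ (B i) ≤ shannonEntropy μ π + n + m := by
  classical
  -- the predecessor-counting function
  set c : ℝ → ℕ := fun t => (Finset.univ.filter (fun j => v j ≤ t)).card with hc
  have hclt : ∀ t, c t < m + 1 := fun t =>
    Nat.lt_succ_of_le ((Finset.card_filter_le _ _).trans (by simp))
  set g : ℝ → Fin (m + 1) := fun t => Fin.ofNat (m + 1) (c t) with hg
  have hgval : ∀ t, (g t : ℕ) = c t := fun t => by
    simp only [hg, Fin.val_ofNat]
    exact Nat.mod_eq_of_lt (hclt t)
  have hBg : ∀ i ω, B i ω = g (x i ω) := fun i ω =>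
    Fin.ext (by rw [hB, hgval])
  have hgmono : Monotone g := by
    intro s t hst
    rw [Fin.le_def, hgval, hgval]
    refine Finset.card_le_card ?_
    intro j hj
    rw [Finset.mem_filter] at hj ⊢
    exact ⟨hj.1, hj.2.trans hst⟩
  have hcmeas : Measurable c := by
    simp only [hc, Finset.card_filter]
    exact Finset.measurable_sum _ (fun j _ => Measurable.ite
      (measurableSet_le measurable_const measurable_id) measurable_const measurable_const)
  have hgmeas : Measurable g :=
    (measurable_from_top (f := fun k : ℕ => Fin.ofNat (m + 1) k)).comp hcmeas
  have hBmeas : ∀ i, Measurable (B i) := fun i => by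
    have : B i = g ∘ x i := funext fun ω => hBg i ω
    rw [this]; exact hgmeas.comp (hx i)
  have hBfib : ∀ i b, MeasurableSet {ω | B i ω = b} := fun i b =>
    (hBmeas i) (measurableSet_singleton b)
  -- π fibers
  have hπuniq : ∀ ω (σ : Equiv.Perm (Fin n)),
      StrictMono (fun j : Fin n => toLex (x (σ j) ω, ((σ j : ℕ)))) → π ω = σ := by
    intro ω σ hσ
    have himg : Finset.univ.image (fun j : Fin n => toLex (x (π ω j) ω, ((π ω j : ℕ))))
        = Finset.univ.image (fun j : Fin n => toLex (x (σ j) ω, ((σ j : ℕ)))) := by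
      have h1 : ∀ τ : Equiv.Perm (Fin n),
          Finset.univ.image (fun j : Fin n => toLex (x (τ j) ω, ((τ j : ℕ))))
            = Finset.univ.image (fun i : Fin n => toLex (x i ω, ((i : ℕ)))) := by
        intro τ
        have he : (fun j : Fin n => toLex (x (τ j) ω, ((τ j : ℕ))))
            = (fun i : Fin n => toLex (x i ω, ((i : ℕ)))) ∘ τ := rfl
        rw [he, ← Finset.image_image, Finset.image_univ_equiv]
      rw [h1 (π ω), h1 σ]
    have hfun := strictMono_image_eq (hπ ω) hσ himg
    refine Equiv.ext fun j => ?_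
    have h2 := congrFun hfun j
    have h3 : ((π ω j : ℕ)) = ((σ j : ℕ)) := congrArg (fun z => (ofLex z).2) h2
    exact Fin.ext h3
  have hπfib : ∀ σ : Equiv.Perm (Fin n), {ω | π ω = σ}
      = {ω | ∀ j k : Fin n, j < k → (x (σ j) ω < x (σ k) ω ∨
          (x (σ j) ω = x (σ k) ω ∧ (σ j : ℕ) < (σ k : ℕ)))} := by
    intro σ
    ext ω
    simp only [Set.mem_setOf_eq]
    constructor
    · rintro rfl j k hjk
      have := hπ ω hjk
      rwa [Prod.Lex.lt_iff] at this
    · intro hω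
      exact hπuniq ω σ (fun j k hjk => Prod.Lex.lt_iff.2 (hω j k hjk))
  have hπfibmeas : ∀ σ : Equiv.Perm (Fin n), MeasurableSet {ω | π ω = σ} := by
    intro σ
    rw [hπfib σ]
    have : {ω | ∀ j k : Fin n, j < k → (x (σ j) ω < x (σ k) ω ∨
        (x (σ j) ω = x (σ k) ω ∧ (σ j : ℕ) < (σ k : ℕ)))}
        = ⋂ (j : Fin n), ⋂ (k : Fin n), {ω | j < k → (x (σ j) ω < x (σ k) ω ∨
          (x (σ j) ω = x (σ k) ω ∧ (σ j : ℕ) < (σ k : ℕ)))} := by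
      ext ω; simp [Set.mem_iInter]
    rw [this]
    refine MeasurableSet.iInter fun j => MeasurableSet.iInter fun k => ?_
    by_cases hjk : j < k
    · have : {ω | j < k → (x (σ j) ω < x (σ k) ω ∨
          (x (σ j) ω = x (σ k) ω ∧ (σ j : ℕ) < (σ k : ℕ)))}
          = {ω | x (σ j) ω < x (σ k) ω} ∪
            ({ω | x (σ j) ω = x (σ k) ω} ∩ {ω | (σ j : ℕ) < (σ k : ℕ)}) := by
        ext ω; simp [hjk]
      rw [this]
      refine ((measurableSet_lt (hx _) (hx _)).union
        ((measurableSet_eq_fun (hx _) (hx _)).inter ?_))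
      by_cases h2 : (σ j : ℕ) < (σ k : ℕ)
      · simp [h2]
      · simp [h2]
    · have : {ω | j < k → (x (σ j) ω < x (σ k) ω ∨
          (x (σ j) ω = x (σ k) ω ∧ (σ j : ℕ) < (σ k : ℕ)))} = Set.univ := by
        ext ω; simp [hjk]
      rw [this]; exact MeasurableSet.univ
  -- joint variables
  set Btup : Ω → (Fin n → Fin (m + 1)) := fun ω i => B i ω with hBtup
  have hBtupfibset : ∀ b, {ω | Btup ω = b} = ⋂ i, {ω | B i ω = b i} := by
    intro b; ext ω; simp [hBtup, funext_iff, Set.mem_iInter]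
  have hBtupfib : ∀ b, MeasurableSet {ω | Btup ω = b} := fun b => by
    rw [hBtupfibset]; exact MeasurableSet.iInter fun i => hBfib i (b i)
  set W : Ω → (Fin n → Fin (m + 1)) × Equiv.Perm (Fin n) := fun ω => (Btup ω, π ω) with hW
  have hWfibset : ∀ p : (Fin n → Fin (m + 1)) × Equiv.Perm (Fin n),
      {ω | W ω = p} = {ω | Btup ω = p.1} ∩ {ω | π ω = p.2} := by
    intro p; ext ω
    simp only [hW, Set.mem_setOf_eq, Set.mem_inter_iff, Prod.ext_iff]
  have hWfib : ∀ p, MeasurableSet {ω | W ω = p} := fun p => by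
    rw [hWfibset]; exact (hBtupfib p.1).inter (hπfibmeas p.2)
  -- independence product formula
  have hindB : iIndepFun B μ := by
    have h2 := hind.comp (fun _ => g) (fun _ => hgmeas)
    have he : (fun i => g ∘ x i) = B := funext fun i => funext fun ω => (hBg i ω).symm
    rwa [he] at h2
  have hprodB : ∀ b : Fin n → Fin (m + 1),
      (μ {ω | Btup ω = b}).toReal = ∏ i, (μ {ω | B i ω = b i}).toReal := by
    intro b
    have h := (iIndepFun_iff_measure_inter_preimage_eq_mul.mp hindB) univ
      (sets := fun i => {b i}) (fun i _ => measurableSet_singleton _)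
    rw [hBtupfibset]
    have e : (⋂ i, {ω | B i ω = b i}) = ⋂ i ∈ (univ : Finset (Fin n)), B i ⁻¹' {b i} := by
      ext ω; simp [Set.mem_iInter, Set.mem_preimage]
    rw [e, h, ENNReal.toReal_prod]
    exact Finset.prod_congr rfl fun i _ => rfl
  -- monotonicity of B along the sorted order
  have hmonoB : ∀ ω, Monotone (fun j => B (π ω j) ω) := by
    intro ω j k hjk
    rcases eq_or_lt_of_le hjk with rfl | h
    · exact le_refl _
    have hlt := hπ ω h
    rw [Prod.Lex.lt_iff] at hlt
    have hxle : x (π ω j) ω ≤ x (π ω k) ω := by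
      rcases hlt with h1 | ⟨h1, _⟩
      · exact h1.le
      · exact h1.le
    show B (π ω j) ω ≤ B (π ω k) ω
    rw [hBg, hBg]
    exact hgmono hxle
  -- entropy computations
  have hBsum : ∀ i, ∑ cc : Fin (m + 1), (μ {ω | B i ω = cc}).toReal = 1 :=
    fun i => pm_sum_one μ (B i) (hBfib i)
  have step1 : ∑ i, shannonEntropy μ (B i) = shannonEntropy μ Btup := by
    unfold shannonEntropy
    rw [sum_H_prod (fun i cc => (μ {ω | B i ω = cc}).toReal)
      (fun i cc => ENNReal.toReal_nonneg) hBsum]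
    exact Finset.sum_congr rfl fun b _ => by rw [hprodB b]
  have hWsum : ∑ p, (μ {ω | W ω = p}).toReal = 1 := pm_sum_one μ W hWfib
  have hBmarg : ∀ b, (μ {ω | Btup ω = b}).toReal
      = ∑ p ∈ univ.filter (fun p : (Fin n → Fin (m + 1)) × Equiv.Perm (Fin n) => p.1 = b),
        (μ {ω | W ω = p}).toReal :=
    fun b => pm_marginal μ W hWfib Prod.fst b
  have step2 : shannonEntropy μ Btup ≤ shannonEntropy μ W := by
    unfold shannonEntropy
    have h := H_comp_le (fun p => (μ {ω | W ω = p}).toReal)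
      (fun p => ENNReal.toReal_nonneg) Prod.fst
    calc ∑ b, (μ {ω | Btup ω = b}).toReal * Real.logb 2 (1 / (μ {ω | Btup ω = b}).toReal)
        = ∑ b, (∑ p ∈ univ.filter
            (fun p : (Fin n → Fin (m + 1)) × Equiv.Perm (Fin n) => p.1 = b),
            (μ {ω | W ω = p}).toReal) *
          Real.logb 2 (1 / ∑ p ∈ univ.filter
            (fun p : (Fin n → Fin (m + 1)) × Equiv.Perm (Fin n) => p.1 = b),
            (μ {ω | W ω = p}).toReal) := by
          refine Finset.sum_congr rfl fun b _ => ?_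
          rw [hBmarg b]
      _ ≤ _ := h
  -- Gibbs step
  have hπsum : ∑ σ, (μ {ω | π ω = σ}).toReal = 1 := pm_sum_one μ π hπfibmeas
  set q : (Fin n → Fin (m + 1)) × Equiv.Perm (Fin n) → ℝ := fun p =>
    (μ {ω | π ω = p.2}).toReal * ((2 : ℝ) ^ (n + m))⁻¹ *
      (if Monotone (fun j => p.1 (p.2 j)) then 1 else 0) with hq
  have hqnonneg : ∀ p, 0 ≤ q p := by
    intro p
    simp only [hq]
    refine mul_nonneg (mul_nonneg ENNReal.toReal_nonneg (by positivity)) ?_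
    split <;> norm_num
  have hqsum : ∑ p, q p ≤ 1 := by
    rw [Fintype.sum_prod_type]
    have hcomm : ∑ b : Fin n → Fin (m + 1), ∑ σ, q (b, σ)
        = ∑ σ, ∑ b : Fin n → Fin (m + 1), q (b, σ) := Finset.sum_comm
    rw [hcomm, ← hπsum]
    refine Finset.sum_le_sum fun σ _ => ?_
    have hsum_b : ∑ b : Fin n → Fin (m + 1), q (b, σ)
        = (μ {ω | π ω = σ}).toReal * ((2 : ℝ) ^ (n + m))⁻¹ *
          ∑ b : Fin n → Fin (m + 1), (if Monotone (fun j => b (σ j)) then (1:ℝ) else 0) := by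
      simp only [hq]
      rw [Finset.mul_sum]
    rw [hsum_b]
    have hcnt := count_mono_le (n := n) (m := m) σ
    calc (μ {ω | π ω = σ}).toReal * ((2 : ℝ) ^ (n + m))⁻¹ *
          ∑ b : Fin n → Fin (m + 1), (if Monotone (fun j => b (σ j)) then (1:ℝ) else 0)
        ≤ (μ {ω | π ω = σ}).toReal * ((2 : ℝ) ^ (n + m))⁻¹ * (2 : ℝ) ^ (n + m) := by
          refine mul_le_mul_of_nonneg_left hcnt ?_
          exact mul_nonneg ENNReal.toReal_nonneg (by positivity)
      _ = (μ {ω | π ω = σ}).toReal := by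
          rw [mul_assoc, inv_mul_cancel₀ (by positivity), mul_one]
  have hsupport : ∀ p, 0 < (μ {ω | W ω = p}).toReal → 0 < q p := by
    intro p hp
    have hne : {ω | W ω = p}.Nonempty := by
      by_contra h
      rw [Set.not_nonempty_iff_eq_empty] at h
      rw [h] at hp
      simp at hp
    obtain ⟨ω, hω⟩ := hne
    have hω' : W ω = p := hω
    have hωB : Btup ω = p.1 := congrArg Prod.fst hω'
    have hωπ : π ω = p.2 := congrArg Prod.snd hω'
    have hmono : Monotone (fun j => p.1 (p.2 j)) := by
      have he : (fun j => p.1 (p.2 j)) = fun j => B (π ω j) ω := by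
        funext j; rw [← hωB, ← hωπ]
      rw [he]; exact hmonoB ω
    have hπpos : 0 < (μ {ω | π ω = p.2}).toReal := by
      refine lt_of_lt_of_le hp ?_
      have hsub : {ω' | W ω' = p} ⊆ {ω' | π ω' = p.2} := by
        intro ω' hh
        exact congrArg Prod.snd hh
      exact (ENNReal.toReal_le_toReal (measure_ne_top μ _) (measure_ne_top μ _)).2
        (measure_mono hsub)
    simp only [hq]
    rw [if_pos hmono, mul_one]
    positivity
  have hfil : ∀ σ, ∑ b : Fin n → Fin (m + 1), (μ {ω | W ω = (b, σ)}).toReal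
      = (μ {ω | π ω = σ}).toReal := by
    intro σ
    have h1 := pm_marginal μ W hWfib Prod.snd σ
    have h2 : {ω | (W ω).2 = σ} = {ω | π ω = σ} := rfl
    rw [h2] at h1
    rw [h1, Finset.sum_filter, Fintype.sum_prod_type]
    refine Finset.sum_congr rfl fun b _ => ?_
    simp
  have step3 : shannonEntropy μ W ≤ shannonEntropy μ π + ((n : ℝ) + m) := by
    have hgibbs := gibbs (fun p => (μ {ω | W ω = p}).toReal) q
      (fun p => ENNReal.toReal_nonneg) hWsum hqnonneg hqsum hsupport
    have hterm : ∀ p, (μ {ω | W ω = p}).toReal * Real.logb 2 (1 / q p)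
        = (μ {ω | W ω = p}).toReal *
          (Real.logb 2 (1 / (μ {ω | π ω = p.2}).toReal) + ((n : ℝ) + m)) := by
      intro p
      rcases eq_or_lt_of_le (ENNReal.toReal_nonneg :
          (0:ℝ) ≤ (μ {ω | W ω = p}).toReal) with h0 | h0
      · rw [← h0]; ring
      · have hq0 := hsupport p h0
        have hmono : Monotone (fun j => p.1 (p.2 j)) := by
          by_contra hcon
          simp only [hq] at hq0
          simp [hcon] at hq0
        have hπpos : 0 < (μ {ω | π ω = p.2}).toReal := by
          simp only [hq] at hq0
          rw [if_pos hmono, mul_one] at hq0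
          by_contra hcon
          push_neg at hcon
          have : (μ {ω | π ω = p.2}).toReal = 0 :=
            le_antisymm hcon ENNReal.toReal_nonneg
          rw [this] at hq0
          simp at hq0
        congr 1
        simp only [hq]
        rw [if_pos hmono, mul_one, one_div, mul_inv, inv_inv,
          Real.logb_mul (by positivity) (by positivity), ← one_div]
        congr 1
        rw [Real.logb_pow, Real.logb_self_eq_one (by norm_num), mul_one]
        push_cast
        ring
    have hRHS : ∑ p : (Fin n → Fin (m + 1)) × Equiv.Perm (Fin n),
        (μ {ω | W ω = p}).toReal * Real.logb 2 (1 / q p)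
        = shannonEntropy μ π + ((n : ℝ) + m) :=
      calc ∑ p : (Fin n → Fin (m + 1)) × Equiv.Perm (Fin n),
          (μ {ω | W ω = p}).toReal * Real.logb 2 (1 / q p)
        = ∑ p : (Fin n → Fin (m + 1)) × Equiv.Perm (Fin n), (μ {ω | W ω = p}).toReal *
            (Real.logb 2 (1 / (μ {ω | π ω = p.2}).toReal) + ((n : ℝ) + m)) :=
          Finset.sum_congr rfl fun p _ => hterm p
      _ = (∑ p, (μ {ω | W ω = p}).toReal *
            Real.logb 2 (1 / (μ {ω | π ω = p.2}).toReal))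
          + ((n : ℝ) + m) * ∑ p, (μ {ω | W ω = p}).toReal := by
          rw [Finset.mul_sum]
          rw [← Finset.sum_add_distrib]
          refine Finset.sum_congr rfl fun p _ => ?_
          ring
      _ = shannonEntropy μ π + ((n : ℝ) + m) := by
          rw [hWsum, mul_one]
          congr 1
          rw [Fintype.sum_prod_type]
          have hcomm : ∑ b : Fin n → Fin (m + 1), ∑ σ, (μ {ω | W ω = (b, σ)}).toReal *
              Real.logb 2 (1 / (μ {ω | π ω = σ}).toReal)
              = ∑ σ, ∑ b : Fin n → Fin (m + 1), (μ {ω | W ω = (b, σ)}).toReal *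
                Real.logb 2 (1 / (μ {ω | π ω = σ}).toReal) := Finset.sum_comm
          rw [hcomm]
          unfold shannonEntropy
          refine Finset.sum_congr rfl fun σ _ => ?_
          rw [← Finset.sum_mul, hfil σ]
    rw [← hRHS]
    unfold shannonEntropy
    exact hgibbs
  have hfinal : ((n : ℝ) + m) = (n : ℝ) + (m : ℝ) := by push_cast; ring
  calc ∑ i, shannonEntropy μ (B i) = shannonEntropy μ Btup := step1
    _ ≤ shannonEntropy μ W := step2
    _ ≤ shannonEntropy μ π + ((n : ℝ) + m) := step3
    _ = shannonEntropy μ π + n + m := by rw [hfinal]; ring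
end

section
/- There is a universal constant C > 0 with the following property. Let n ≥ 2, λ = ⌈log₂ n⌉, and let D₁, …, Dₙ be atomless Borel probability measures on ℝ. Sample λ·n mutually independent real random variables s_{j,i} (for 1 ≤ j ≤ λ, 1 ≤ i ≤ n) with s_{j,i} distributed according to D_i, let u₁ ≤ u₂ ≤ ⋯ ≤ u_{λn} be these values sorted in nondecreasing order, and set v_k = u_{kλ} for 1 ≤ k ≤ n, with v₀ = −∞ and v_{n+1} = +∞. Independently of the samples, let x₁, …, xₙ be mutually independent with x_i distributed according to D_i, and for 0 ≤ k ≤ n let Z_k = {i ∈ {1, …, n} : v_k ≤ x_i < v_{k+1}}. Then with probability at least 1 − n⁻² over the choice of the samples s_{j,i}, for every k ∈ {0, 1, …, n} one has E[|Z_k|] ≤ C and E[|Z_k|²] ≤ C, where the expectations are over x₁, …, xₙ. -/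
open MeasureTheory Filter Set Topology


private lemma countP_or_disj {α : Type*} (p q : α → Bool)
    (h : ∀ x, ¬(p x = true ∧ q x = true)) :
    ∀ l : List α, l.countP (fun x => p x || q x) = l.countP p + l.countP q := by
  intro l
  induction l with
  | nil => simp
  | cons a l ih =>
    simp only [List.countP_cons, ih]
    by_cases hp : p a = true
    · have hq : ¬ q a = true := fun hq => h a ⟨hp, hq⟩
      simp [hp, hq]
      omega
    · by_cases hq : q a = true
      · simp [hp, hq]; omega
      · simp [hp, hq]

private lemma take_all_le {L : List ℝ} (hL : L.Pairwise (· ≤ ·)) {i : ℕ} (hi : i < L.length) :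
    ∀ x ∈ L.take (i+1), x ≤ L.getD i 0 := by
  intro x hx
  rw [List.getD_eq_getElem L 0 hi]
  rw [List.mem_iff_getElem] at hx
  obtain ⟨t, ht, rfl⟩ := hx
  have ht' : t < i + 1 := by
    have : (L.take (i+1)).length = min (i+1) L.length := List.length_take
    omega
  rw [List.getElem_take]
  rcases Nat.lt_or_ge t i with h | h
  · exact List.pairwise_iff_getElem.1 hL t i (by omega) hi h
  · have : t = i := by omega
    subst this; exact le_rfl

private lemma drop_all_ge {L : List ℝ} (hL : L.Pairwise (· ≤ ·)) {j : ℕ} (hj : j < L.length) :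
    ∀ x ∈ L.drop j, L.getD j 0 ≤ x := by
  intro x hx
  rw [List.getD_eq_getElem L 0 hj]
  rw [List.mem_iff_getElem] at hx
  obtain ⟨t, ht, rfl⟩ := hx
  rw [List.getElem_drop]
  rcases Nat.eq_zero_or_pos t with h | h
  · subst h; simp
  · exact List.pairwise_iff_getElem.1 hL j (j + t) hj (by
      have : (L.drop j).length = L.length - j := List.length_drop; omega) (by omega)

/-- count of elements strictly above the i-th sorted element -/
private lemma countP_gt_le {L : List ℝ} (hL : L.Pairwise (· ≤ ·)) {i : ℕ} (hi : i < L.length) :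
    L.countP (fun x => decide (L.getD i 0 < x)) ≤ L.length - i - 1 := by
  classical
  set p1 : ℝ → Bool := fun x => decide (x ≤ L.getD i 0) with hp1
  set pm : ℝ → Bool := fun x => decide (L.getD i 0 < x) with hpm
  have hdisj : ∀ x, ¬(p1 x = true ∧ pm x = true) := by
    intro x ⟨h1, h2⟩
    simp only [p1, pm, decide_eq_true_eq] at h1 h2
    exact absurd h1 (not_le.2 h2)
  have hsum := countP_or_disj p1 pm hdisj L
  have hle : L.countP (fun x => p1 x || pm x) ≤ L.length := List.countP_le_length
  have h1ge : i + 1 ≤ L.countP p1 := by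
    have hsplit : L.countP p1 = (L.take (i+1)).countP p1 + (L.drop (i+1)).countP p1 := by
      conv_lhs => rw [← List.take_append_drop (i+1) L]
      exact List.countP_append
    have htake : (L.take (i+1)).countP p1 = (L.take (i+1)).length := by
      rw [List.countP_eq_length]
      intro a ha
      simp only [p1, decide_eq_true_eq]
      exact take_all_le hL hi a ha
    have : (L.take (i+1)).length = i + 1 := by
      rw [List.length_take]; omega
    omega
  omega

/-- count of elements strictly below the j-th sorted element -/
private lemma countP_lt_le {L : List ℝ} (hL : L.Pairwise (· ≤ ·)) {j : ℕ} (hj : j < L.length) :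
    L.countP (fun x => decide (x < L.getD j 0)) ≤ j := by
  classical
  set p2 : ℝ → Bool := fun x => decide (L.getD j 0 ≤ x) with hp2
  set pm : ℝ → Bool := fun x => decide (x < L.getD j 0) with hpm
  have hdisj : ∀ x, ¬(pm x = true ∧ p2 x = true) := by
    intro x ⟨h1, h2⟩
    simp only [p2, pm, decide_eq_true_eq] at h1 h2
    exact absurd h2 (not_le.2 h1)
  have hsum := countP_or_disj pm p2 hdisj L
  have hle : L.countP (fun x => pm x || p2 x) ≤ L.length := List.countP_le_length
  have h2ge : L.length - j ≤ L.countP p2 := by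
    have hsplit : L.countP p2 = (L.take j).countP p2 + (L.drop j).countP p2 := by
      conv_lhs => rw [← List.take_append_drop j L]
      exact List.countP_append
    have hdrop : (L.drop j).countP p2 = (L.drop j).length := by
      rw [List.countP_eq_length]
      intro a ha
      simp only [p2, decide_eq_true_eq]
      exact drop_all_ge hL hj a ha
    have : (L.drop j).length = L.length - j := List.length_drop
    omega
  omega

/-- count of elements strictly between the i-th and j-th sorted elements -/
private lemma countP_between_le {L : List ℝ} (hL : L.Pairwise (· ≤ ·)) {i j : ℕ}
    (hi : i < L.length) (hj : j < L.length) (hij : i < j) :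
    L.countP (fun x => decide (L.getD i 0 < x ∧ x < L.getD j 0)) ≤ j - i - 1 := by
  classical
  by_cases hab : L.getD i 0 < L.getD j 0
  · set p1 : ℝ → Bool := fun x => decide (x ≤ L.getD i 0) with hp1
    set p2 : ℝ → Bool := fun x => decide (L.getD j 0 ≤ x) with hp2
    set pm : ℝ → Bool := fun x => decide (L.getD i 0 < x ∧ x < L.getD j 0) with hpm
    have hd12 : ∀ x, ¬(p1 x = true ∧ p2 x = true) := by
      intro x ⟨h1, h2⟩
      simp only [p1, p2, decide_eq_true_eq] at h1 h2
      exact absurd (h2.trans h1) (not_le.2 hab)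
    have hd3 : ∀ x, ¬((p1 x || p2 x) = true ∧ pm x = true) := by
      intro x ⟨h1, h2⟩
      simp only [p1, p2, pm, decide_eq_true_eq, Bool.or_eq_true] at h1 h2
      rcases h1 with h1 | h1
      · exact absurd h1 (not_le.2 h2.1)
      · exact absurd h1 (not_le.2 h2.2)
    have hsum12 := countP_or_disj p1 p2 hd12 L
    have hsum3 := countP_or_disj (fun x => p1 x || p2 x) pm hd3 L
    have hle : L.countP (fun x => (p1 x || p2 x) || pm x) ≤ L.length := List.countP_le_length
    have h1ge : i + 1 ≤ L.countP p1 := by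
      have hsplit : L.countP p1 = (L.take (i+1)).countP p1 + (L.drop (i+1)).countP p1 := by
        conv_lhs => rw [← List.take_append_drop (i+1) L]
        exact List.countP_append
      have htake : (L.take (i+1)).countP p1 = (L.take (i+1)).length := by
        rw [List.countP_eq_length]
        intro a ha
        simp only [p1, decide_eq_true_eq]
        exact take_all_le hL hi a ha
      have : (L.take (i+1)).length = i + 1 := by rw [List.length_take]; omega
      omega
    have h2ge : L.length - j ≤ L.countP p2 := by
      have hsplit : L.countP p2 = (L.take j).countP p2 + (L.drop j).countP p2 := by
        conv_lhs => rw [← List.take_append_drop j L]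
        exact List.countP_append
      have hdrop : (L.drop j).countP p2 = (L.drop j).length := by
        rw [List.countP_eq_length]
        intro a ha
        simp only [p2, decide_eq_true_eq]
        exact drop_all_ge hL hj a ha
      have : (L.drop j).length = L.length - j := List.length_drop
      omega
    omega
  · have : L.countP (fun x => decide (L.getD i 0 < x ∧ x < L.getD j 0)) = 0 := by
      rw [List.countP_eq_zero]
      intro a _
      simp only [decide_eq_true_eq, not_and]
      intro h1 h2
      exact hab (h1.trans h2)
    omega


noncomputable def cdfS {n : ℕ} (D : Fin n → Measure ℝ) (x : ℝ) : ℝ :=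
  ∑ i, (D i (Set.Iic x)).toReal

noncomputable def quant {n : ℕ} (D : Fin n → Measure ℝ) (a : ℕ) : ℝ :=
  sInf {x : ℝ | (a : ℝ) ≤ cdfS D x}

section quantile

variable {n : ℕ} (D : Fin n → Measure ℝ) (hD : ∀ i, IsProbabilityMeasure (D i))

private lemma cdfS_mono (hD : ∀ i, IsProbabilityMeasure (D i)) : Monotone (cdfS D) := by
  intro x y hxy
  refine Finset.sum_le_sum fun i _ => ?_
  haveI := hD i
  exact ENNReal.toReal_mono (measure_ne_top _ _) (measure_mono (Set.Iic_subset_Iic.2 hxy))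

private lemma cdfS_nonneg (x : ℝ) : 0 ≤ cdfS D x :=
  Finset.sum_nonneg fun i _ => ENNReal.toReal_nonneg

private lemma cdfS_le (hD : ∀ i, IsProbabilityMeasure (D i)) (x : ℝ) : cdfS D x ≤ n := by
  have : cdfS D x ≤ ∑ _i : Fin n, (1:ℝ) := by
    refine Finset.sum_le_sum fun i _ => ?_
    haveI := hD i
    have h1 : D i (Set.Iic x) ≤ 1 := prob_le_one
    calc (D i (Set.Iic x)).toReal ≤ (1 : ENNReal).toReal :=
          ENNReal.toReal_mono (by simp) h1
      _ = 1 := by simp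
  simpa using this

private lemma tendsto_cdfS_atTop (hD : ∀ i, IsProbabilityMeasure (D i)) :
    Tendsto (cdfS D) atTop (𝓝 n) := by
  have h : ∀ i : Fin n, Tendsto (fun x => (D i (Set.Iic x)).toReal) atTop (𝓝 1) := by
    intro i
    haveI := hD i
    have h1 : Tendsto (fun x => D i (Set.Iic x)) atTop (𝓝 (D i Set.univ)) :=
      tendsto_measure_Iic_atTop (D i)
    have h2 := (ENNReal.tendsto_toReal (measure_ne_top (D i) Set.univ)).comp h1
    simpa [measure_univ, Function.comp_def] using h2
  have := tendsto_finset_sum (Finset.univ : Finset (Fin n)) (fun i _ => h i)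
  rw [show cdfS D = fun x => ∑ i, (D i (Set.Iic x)).toReal from rfl]
  simpa using this

private lemma exists_cdfS_lt_one (hD : ∀ i, IsProbabilityMeasure (D i)) :
    ∃ x : ℝ, cdfS D x < 1 := by
  have h : ∀ i : Fin n, Tendsto (fun k : ℕ => (D i (Set.Iic (-(k:ℝ)))).toReal) atTop (𝓝 0) := by
    intro i
    haveI := hD i
    have hint : (⋂ k : ℕ, Set.Iic (-(k:ℝ))) = ∅ := by
      ext x
      simp only [Set.mem_iInter, Set.mem_Iic, Set.mem_empty_iff_false, iff_false, not_forall,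
        not_le]
      obtain ⟨k, hk⟩ := exists_nat_gt (-x)
      exact ⟨k, by linarith⟩
    have h1 : Tendsto (fun k : ℕ => D i (Set.Iic (-(k:ℝ)))) atTop
        (𝓝 (D i (⋂ k : ℕ, Set.Iic (-(k:ℝ))))) := by
      refine tendsto_measure_iInter_atTop (fun k => (measurableSet_Iic).nullMeasurableSet)
        (fun j k hjk => Set.Iic_subset_Iic.2 (by
          simp only [neg_le_neg_iff, Nat.cast_le]; exact hjk)) ⟨0, measure_ne_top _ _⟩
    rw [hint, measure_empty] at h1
    have h2 := (ENNReal.tendsto_toReal (by simp : (0:ENNReal) ≠ ⊤)).comp h1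
    simpa [Function.comp_def] using h2
  have hsum : Tendsto (fun k : ℕ => cdfS D (-(k:ℝ))) atTop (𝓝 0) := by
    have := tendsto_finset_sum (Finset.univ : Finset (Fin n)) (fun i _ => h i)
    simpa [cdfS] using this
  have := hsum.eventually (eventually_lt_nhds (by norm_num : (0:ℝ) < 1))
  obtain ⟨k, hk⟩ := this.exists
  exact ⟨-(k:ℝ), hk⟩

private lemma Sne (hD : ∀ i, IsProbabilityMeasure (D i)) {a : ℕ} (han : (a:ℝ) < n) :
    {x : ℝ | (a : ℝ) ≤ cdfS D x}.Nonempty := by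
  have := (tendsto_cdfS_atTop D hD).eventually (eventually_ge_nhds han)
  exact this.exists

private lemma Sbdd (hD : ∀ i, IsProbabilityMeasure (D i)) {a : ℕ} (ha1 : 1 ≤ a) :
    BddBelow {x : ℝ | (a : ℝ) ≤ cdfS D x} := by
  obtain ⟨x₀, hx₀⟩ := exists_cdfS_lt_one D hD
  refine ⟨x₀, fun s hs => ?_⟩
  by_contra hlt
  push_neg at hlt
  have : cdfS D s ≤ cdfS D x₀ := cdfS_mono D hD hlt.le
  have ha : (1:ℝ) ≤ (a:ℝ) := by exact_mod_cast ha1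
  have := hs
  simp only [Set.mem_setOf_eq] at this
  linarith

private lemma quant_ge (hD : ∀ i, IsProbabilityMeasure (D i)) {a : ℕ} (han : (a:ℝ) < n) :
    (a : ℝ) ≤ cdfS D (quant D a) := by
  have hq : sInf {x : ℝ | (a : ℝ) ≤ cdfS D x} = quant D a := rfl
  set q := quant D a with hqq
  have hse := Sne D hD han
  have hterm : ∀ k : ℕ, (a:ℝ) ≤ cdfS D (q + 1/(k+1)) := by
    intro k
    have hlt : sInf {x : ℝ | (a : ℝ) ≤ cdfS D x} < q + 1/(k+1) := by
      rw [hq]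
      have : (0:ℝ) < 1/(k+1) := by positivity
      linarith
    obtain ⟨s, hs, hs'⟩ := exists_lt_of_csInf_lt hse hlt
    exact le_trans hs (cdfS_mono D hD hs'.le)
  have hint : (⋂ k : ℕ, Set.Iic (q + 1/((k:ℝ)+1))) = Set.Iic q := by
    ext x
    simp only [Set.mem_iInter, Set.mem_Iic]
    constructor
    · intro hx
      by_contra hgt
      push_neg at hgt
      obtain ⟨k, hk⟩ := exists_nat_one_div_lt (sub_pos.2 hgt)
      have := hx k
      linarith
    · intro hx k
      have : (0:ℝ) < 1/((k:ℝ)+1) := by positivity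
      linarith
  have htend : Tendsto (fun k : ℕ => cdfS D (q + 1/((k:ℝ)+1))) atTop (𝓝 (cdfS D q)) := by
    have h : ∀ i : Fin n, Tendsto (fun k : ℕ => (D i (Set.Iic (q + 1/((k:ℝ)+1)))).toReal) atTop
        (𝓝 ((D i (Set.Iic q)).toReal)) := by
      intro i
      haveI := hD i
      have h1 : Tendsto (fun k : ℕ => D i (Set.Iic (q + 1/((k:ℝ)+1)))) atTop
          (𝓝 (D i (⋂ k : ℕ, Set.Iic (q + 1/((k:ℝ)+1))))) := by
        refine tendsto_measure_iInter_atTop (fun k => measurableSet_Iic.nullMeasurableSet)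
          (fun j k hjk => Set.Iic_subset_Iic.2 ?_) ⟨0, measure_ne_top _ _⟩
        have hj : (j:ℝ) ≤ k := by exact_mod_cast hjk
        have : 1/((k:ℝ)+1) ≤ 1/((j:ℝ)+1) := by
          apply one_div_le_one_div_of_le <;> linarith
        linarith
      rw [hint] at h1
      exact (ENNReal.tendsto_toReal (measure_ne_top _ _)).comp h1
    have := tendsto_finset_sum (Finset.univ : Finset (Fin n)) (fun i _ => h i)
    simpa [cdfS] using this
  exact ge_of_tendsto' htend hterm

private lemma quant_le (hD : ∀ i, IsProbabilityMeasure (D i)) (hatom : ∀ i r, D i {r} = 0)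
    {a : ℕ} (ha1 : 1 ≤ a) : cdfS D (quant D a) ≤ a := by
  have hq : sInf {x : ℝ | (a : ℝ) ≤ cdfS D x} = quant D a := rfl
  set q := quant D a with hqq
  have hbdd := Sbdd D hD ha1
  -- step A : mass of Iio q is at most a
  have hterm : ∀ k : ℕ, cdfS D (q - 1/((k:ℝ)+1)) ≤ a := by
    intro k
    by_contra hgt
    push_neg at hgt
    have hmem : q - 1/((k:ℝ)+1) ∈ {x : ℝ | (a : ℝ) ≤ cdfS D x} := le_of_lt hgt
    have := csInf_le hbdd hmem
    rw [hq] at this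
    have hpos : (0:ℝ) < 1/((k:ℝ)+1) := by positivity
    linarith
  have hun : (⋃ k : ℕ, Set.Iic (q - 1/((k:ℝ)+1))) = Set.Iio q := by
    ext x
    simp only [Set.mem_iUnion, Set.mem_Iic, Set.mem_Iio]
    constructor
    · rintro ⟨k, hk⟩
      have : (0:ℝ) < 1/((k:ℝ)+1) := by positivity
      linarith
    · intro hx
      obtain ⟨k, hk⟩ := exists_nat_one_div_lt (sub_pos.2 hx)
      exact ⟨k, by linarith⟩
  have hIio : ∑ i, (D i (Set.Iio q)).toReal ≤ a := by
    have htend : Tendsto (fun k : ℕ => cdfS D (q - 1/((k:ℝ)+1))) atTop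
        (𝓝 (∑ i, (D i (Set.Iio q)).toReal)) := by
      have h : ∀ i : Fin n, Tendsto (fun k : ℕ => (D i (Set.Iic (q - 1/((k:ℝ)+1)))).toReal) atTop
          (𝓝 ((D i (Set.Iio q)).toReal)) := by
        intro i
        haveI := hD i
        have h1 : Tendsto (fun k : ℕ => D i (Set.Iic (q - 1/((k:ℝ)+1)))) atTop
            (𝓝 (D i (⋃ k : ℕ, Set.Iic (q - 1/((k:ℝ)+1))))) := by
          refine tendsto_measure_iUnion_atTop (fun j k hjk => Set.Iic_subset_Iic.2 ?_)
          have hj : (j:ℝ) ≤ k := by exact_mod_cast hjk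
          have : 1/((k:ℝ)+1) ≤ 1/((j:ℝ)+1) := by
            apply one_div_le_one_div_of_le <;> linarith
          linarith
        rw [hun] at h1
        exact (ENNReal.tendsto_toReal (measure_ne_top _ _)).comp h1
      have := tendsto_finset_sum (Finset.univ : Finset (Fin n)) (fun i _ => h i)
      simpa [cdfS] using this
    exact le_of_tendsto' htend hterm
  -- step B : Iic q has the same mass as Iio q
  have hIicIio : ∀ i, D i (Set.Iic q) = D i (Set.Iio q) := by
    intro i
    have : Set.Iio q ∪ {q} = Set.Iic q := Set.Iio_union_right
    rw [← this, measure_union (by simp [Set.disjoint_singleton_right]) (measurableSet_singleton q),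
      hatom i q, add_zero]
  calc cdfS D q = ∑ i, (D i (Set.Iio q)).toReal := by
        unfold cdfS; exact Finset.sum_congr rfl fun i _ => by rw [hIicIio i]
    _ ≤ a := hIio

private lemma quant_lt_quant (hD : ∀ i, IsProbabilityMeasure (D i))
    (hatom : ∀ i r, D i {r} = 0) {a b : ℕ} (ha1 : 1 ≤ a) (hab : a < b) (hbn : (b:ℝ) < n) :
    quant D a < quant D b := by
  have hle : quant D a ≤ quant D b := by
    apply csInf_le_csInf (Sbdd D hD ha1) (Sne D hD hbn)
    intro x hx
    simp only [Set.mem_setOf_eq] at hx ⊢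
    have : (a:ℝ) ≤ (b:ℝ) := by exact_mod_cast hab.le
    linarith
  rcases lt_or_eq_of_le hle with h | h
  · exact h
  · exfalso
    have h1 := quant_ge D hD hbn
    have h2 := quant_le D hD hatom ha1
    rw [h] at h2
    have : (b:ℝ) ≤ (a:ℝ) := h1.trans h2
    have : (a:ℝ) < (b:ℝ) := by exact_mod_cast hab
    linarith

/-- mass of the open interval between consecutive quantiles -/
private lemma ioo_weight (hD : ∀ i, IsProbabilityMeasure (D i)) (hatom : ∀ i r, D i {r} = 0)
    {a b : ℕ} (ha1 : 1 ≤ a) (hab : a < b) (hbn : (b:ℝ) < n) :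
    (b:ℝ) - a ≤ ∑ i, (D i (Set.Ioo (quant D a) (quant D b))).toReal := by
  have hqq := quant_lt_quant D hD hatom ha1 hab hbn
  have hdecomp : ∀ i, (D i (Set.Iic (quant D b))).toReal =
      (D i (Set.Iic (quant D a))).toReal + (D i (Set.Ioo (quant D a) (quant D b))).toReal := by
    intro i
    haveI := hD i
    have h1 : Set.Iic (quant D a) ∪ Set.Ioc (quant D a) (quant D b) = Set.Iic (quant D b) :=
      Set.Iic_union_Ioc_eq_Iic hqq.le
    have h2 : D i (Set.Iic (quant D b)) =
        D i (Set.Iic (quant D a)) + D i (Set.Ioc (quant D a) (quant D b)) := by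
      rw [← h1, measure_union ?_ measurableSet_Ioc]
      exact Set.Iic_disjoint_Ioc le_rfl
    have h3 : D i (Set.Ioc (quant D a) (quant D b)) =
        D i (Set.Ioo (quant D a) (quant D b)) := by
      have : Set.Ioo (quant D a) (quant D b) ∪ {quant D b} =
          Set.Ioc (quant D a) (quant D b) := Set.Ioo_union_right hqq
      rw [← this, measure_union (by simp [Set.disjoint_singleton_right])
        (measurableSet_singleton _), hatom, add_zero]
    rw [h2, h3, ENNReal.toReal_add (measure_ne_top _ _) (measure_ne_top _ _)]
  have hsum : cdfS D (quant D b) = cdfS D (quant D a) +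
      ∑ i, (D i (Set.Ioo (quant D a) (quant D b))).toReal := by
    unfold cdfS
    rw [← Finset.sum_add_distrib]
    exact Finset.sum_congr rfl fun i _ => hdecomp i
  have h1 := quant_ge D hD hbn
  have h2 := quant_le D hD hatom ha1
  linarith

end quantile


lemma pi_integral {ι : Type*} [Fintype ι] (D : ι → Measure ℝ)
    (hD : ∀ i, IsProbabilityMeasure (D i)) (f : ι → ℝ → ℝ) :
    ∫ x : ι → ℝ, ∏ i, f i (x i) ∂(Measure.pi D) = ∏ i, ∫ y, f i y ∂(D i) := by
  have hsf : ∀ i : ι, @SigmaFinite ℝ _ (D i) := fun i => by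
    haveI := hD i; infer_instance
  exact MeasureTheory.integral_fintype_prod_eq_prod (𝕜 := ℝ) (μ := D) f

lemma pi_integrable {ι : Type*} [Fintype ι] (D : ι → Measure ℝ)
    (hD : ∀ i, IsProbabilityMeasure (D i)) (f : ι → ℝ → ℝ)
    (hf : ∀ i, Integrable (f i) (D i)) :
    Integrable (fun x : ι → ℝ => ∏ i, f i (x i)) (Measure.pi D) := by
  have hsf : ∀ i : ι, @SigmaFinite ℝ _ (D i) := fun i => by
    haveI := hD i; infer_instance
  exact MeasureTheory.Integrable.fintype_prod_dep (μ := D) hf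

private lemma chernoff_bound {ι : Type*} [Fintype ι] (μ : ι → Measure ℝ)
    (hμ : ∀ i, IsProbabilityMeasure (μ i)) (I : Set ℝ) (hI : MeasurableSet I) (ε : ℝ) :
    (Measure.pi μ {ω : ι → ℝ | (∑ p, I.indicator (fun _ => (1:ℝ)) (ω p)) ≤ ε}).toReal ≤
      Real.exp (Real.log 2 * ε - (∑ p, (μ p I).toReal) / 2) := by
  classical
  haveI := fun i => hμ i
  haveI : IsProbabilityMeasure (Measure.pi μ) := by infer_instance
  set t : ℝ := -Real.log 2 with ht
  have ht0 : t ≤ 0 := by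
    rw [ht]; simp [Real.log_nonneg, one_le_two]
  set X : (ι → ℝ) → ℝ := fun ω => ∑ p, I.indicator (fun _ => (1:ℝ)) (ω p) with hX
  set f : ι → ℝ → ℝ := fun _ y => 1 + I.indicator (fun _ => Real.exp t - 1) y with hf
  have hexp : ∀ ω : ι → ℝ, Real.exp (t * X ω) = ∏ p, f p (ω p) := by
    intro ω
    rw [hX]
    simp only [Finset.mul_sum]
    rw [Real.exp_sum]
    refine Finset.prod_congr rfl fun p _ => ?_
    by_cases h : ω p ∈ I
    · simp [hf, Set.indicator_of_mem h]
    · simp [hf, Set.indicator_of_notMem h]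
  have hfint : ∀ p, Integrable (f p) (μ p) := by
    intro p
    exact (integrable_const 1).add ((integrable_const _).indicator hI)
  have hint : Integrable (fun ω => Real.exp (t * X ω)) (Measure.pi μ) := by
    exact (pi_integrable μ hμ f hfint).congr (ae_of_all _ fun ω => (hexp ω).symm)
  have hmarkov := ProbabilityTheory.measure_le_le_exp_mul_mgf (X := X)
    (μ := Measure.pi μ) (t := t) ε ht0 hint
  have hfactor : ∀ p, ∫ y, f p y ∂(μ p) = 1 + (Real.exp t - 1) * (μ p I).toReal := by
    intro p
    rw [hf]
    simp only
    rw [integral_add (integrable_const 1) ((integrable_const _).indicator hI),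
      integral_const, integral_indicator_const _ hI]
    simp [measure_univ, smul_eq_mul, mul_comm, Measure.real]
  have hval : ProbabilityTheory.mgf X (Measure.pi μ) t
      = ∏ p, (1 + (Real.exp t - 1) * (μ p I).toReal) := by
    have h1 : ProbabilityTheory.mgf X (Measure.pi μ) t
        = ∫ ω, ∏ p, f p (ω p) ∂(Measure.pi μ) := by
      refine integral_congr_ae (ae_of_all _ fun ω => hexp ω)
    rw [h1, pi_integral μ hμ f]
    exact Finset.prod_congr rfl fun p _ => hfactor p
  have hexpt : Real.exp t = 1/2 := by
    rw [ht, Real.exp_neg, Real.exp_log two_pos]; norm_num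
  have hprodle : ∏ p, (1 + (Real.exp t - 1) * (μ p I).toReal)
      ≤ Real.exp (-(∑ p, (μ p I).toReal) / 2) := by
    have h2 : Real.exp (-(∑ p, (μ p I).toReal) / 2)
        = ∏ p, Real.exp (-(μ p I).toReal / 2) := by
      rw [← Real.exp_sum]
      congr 1
      rw [← Finset.sum_div, ← Finset.sum_neg_distrib]
    rw [h2]
    refine Finset.prod_le_prod (fun p _ => ?_) (fun p _ => ?_)
    · have hq1 : (μ p I).toReal ≤ 1 := by
        haveI := hμ p
        calc (μ p I).toReal ≤ (1 : ENNReal).toReal := ENNReal.toReal_mono (by simp) prob_le_one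
          _ = 1 := by simp
      rw [hexpt]
      nlinarith [ENNReal.toReal_nonneg (a := μ p I)]
    · have := Real.add_one_le_exp (-(μ p I).toReal / 2)
      rw [hexpt]
      nlinarith [ENNReal.toReal_nonneg (a := μ p I)]
  calc (Measure.pi μ {ω : ι → ℝ | X ω ≤ ε}).toReal
      ≤ Real.exp (-t * ε) * ProbabilityTheory.mgf X (Measure.pi μ) t := hmarkov
    _ = Real.exp (Real.log 2 * ε) * ∏ p, (1 + (Real.exp t - 1) * (μ p I).toReal) := by
        rw [hval, ht, neg_neg]
    _ ≤ Real.exp (Real.log 2 * ε) * Real.exp (-(∑ p, (μ p I).toReal) / 2) :=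
        mul_le_mul_of_nonneg_left hprodle (Real.exp_nonneg _)
    _ = Real.exp (Real.log 2 * ε - (∑ p, (μ p I).toReal) / 2) := by
        rw [← Real.exp_add]; ring_nf

private lemma sum_indicator_eq_countP {ι : Type*} [Fintype ι] (ωs : ι → ℝ) (I : Set ℝ)
    [DecidablePred (· ∈ I)] :
    (∑ p, I.indicator (fun _ => (1:ℝ)) (ωs p))
      = ((((Finset.univ.val.map ωs).sort (· ≤ ·)).countP (fun y => decide (y ∈ I)) : ℕ) : ℝ) := by
  have h1 : ∀ p : ι, I.indicator (fun _ => (1:ℝ)) (ωs p) = if ωs p ∈ I then 1 else 0 := by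
    intro p; by_cases h : ωs p ∈ I <;> simp [h]
  rw [Finset.sum_congr rfl fun p _ => h1 p, Finset.sum_boole]
  norm_cast
  have h2 : (((Finset.univ.val.map ωs).sort (· ≤ ·)).countP (fun y => decide (y ∈ I)))
      = Multiset.countP (fun y => y ∈ I) (Finset.univ.val.map ωs) := by
    rw [← Multiset.coe_countP, Multiset.sort_eq]
  rw [h2, Multiset.countP_map]
  rfl

private lemma measurableSet_ge_coe (e : EReal) : MeasurableSet {x : ℝ | e ≤ (x:EReal)} := by
  induction e using EReal.rec with
  | bot =>
      have : {x : ℝ | (⊥:EReal) ≤ (x:EReal)} = Set.univ := by ext x; simp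
      rw [this]; exact MeasurableSet.univ
  | coe r =>
      have : {x : ℝ | (r:EReal) ≤ (x:EReal)} = Set.Ici r := by
        ext x; simp [EReal.coe_le_coe_iff]
      rw [this]; exact measurableSet_Ici
  | top =>
      have : {x : ℝ | (⊤:EReal) ≤ (x:EReal)} = ∅ := by
        ext x
        simp only [Set.mem_setOf_eq, Set.mem_empty_iff_false, iff_false, top_le_iff]
        exact EReal.coe_ne_top x
      rw [this]; exact MeasurableSet.empty

private lemma measurableSet_lt_coe (e : EReal) : MeasurableSet {x : ℝ | (x:EReal) < e} := by
  induction e using EReal.rec with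
  | bot =>
      have : {x : ℝ | (x:EReal) < (⊥:EReal)} = ∅ := by
        ext x; simp
      rw [this]; exact MeasurableSet.empty
  | coe r =>
      have : {x : ℝ | (x:EReal) < (r:EReal)} = Set.Iio r := by
        ext x; simp [EReal.coe_lt_coe_iff]
      rw [this]; exact measurableSet_Iio
  | top =>
      have : {x : ℝ | (x:EReal) < (⊤:EReal)} = Set.univ := by
        ext x; simpa using EReal.coe_lt_top x
      rw [this]; exact MeasurableSet.univ

private lemma det_bound {n lam : ℕ} (hn : 2 ≤ n) (hlam1 : 1 ≤ lam)
    (D : Fin n → Measure ℝ) (hD : ∀ i, IsProbabilityMeasure (D i))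
    (hatom : ∀ i r, D i {r} = 0)
    (v : (Fin lam × Fin n → ℝ) → Fin (n + 2) → EReal)
    (hv : ∀ ωs k, v ωs k =
      if (k : ℕ) = 0 then (⊥ : EReal)
      else if (k : ℕ) = n + 1 then (⊤ : EReal)
      else ((((Finset.univ.val.map ωs).sort (· ≤ ·)).getD ((k : ℕ) * lam - 1) 0 : ℝ) : EReal))
    (ωs : Fin lam × Fin n → ℝ)
    (hgood : ∀ a b : ℕ, 1 ≤ a → (b:ℝ) ≤ (n:ℝ) - 1 → a + 20 ≤ b →
      (lam:ℝ) < ∑ p : Fin lam × Fin n,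
        (Set.Ioo (quant D a) (quant D b)).indicator (fun _ => (1:ℝ)) (ωs p))
    (k : Fin (n+1)) :
    ∑ i, (D i {x : ℝ | v ωs k.castSucc ≤ (x:EReal) ∧ (x:EReal) < v ωs k.succ}).toReal ≤ 22 := by
  classical
  by_contra hWc
  push_neg at hWc
  set αe := v ωs k.castSucc with hαe
  set βe := v ωs k.succ with hβe
  set A : Set ℝ := {x : ℝ | αe ≤ (x:EReal) ∧ (x:EReal) < βe} with hA
  set W : ℝ := ∑ i, (D i A).toReal with hWdef
  have hW : 22 < W := hWc
  set L : List ℝ := (Finset.univ.val.map ωs).sort (· ≤ ·) with hL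
  have hsort : L.Pairwise (· ≤ ·) := Multiset.pairwise_sort _ _
  have hlen : L.length = lam * n := by
    rw [hL]
    simp [Multiset.length_sort, Fintype.card_prod]
  have hkn' : (k:ℕ) ≤ n := Nat.lt_succ_iff.mp k.isLt
  have hα : αe = if (k:ℕ) = 0 then (⊥:EReal)
      else ((L.getD ((k:ℕ)*lam - 1) 0 : ℝ) : EReal) := by
    rw [hαe, hv ωs k.castSucc, Fin.coe_castSucc]
    by_cases h0 : (k:ℕ) = 0
    · simp [h0]
    · have hne : ¬((k:ℕ) = n + 1) := by omega
      rw [if_neg h0, if_neg hne, if_neg h0]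
  have hβ : βe = if (k:ℕ) = n then (⊤:EReal)
      else ((L.getD (((k:ℕ)+1)*lam - 1) 0 : ℝ) : EReal) := by
    rw [hβe, hv ωs k.succ, Fin.val_succ]
    by_cases hknn : (k:ℕ) = n
    · simp [hknn]
    · have h1 : ¬((k:ℕ)+1 = 0) := by omega
      have h2 : ¬((k:ℕ)+1 = n+1) := by omega
      rw [if_neg h1, if_neg h2, if_neg hknn]
  have hle_getD : ∀ i j : ℕ, i ≤ j → j < L.length → L.getD i 0 ≤ L.getD j 0 := by
    intro i j hij hj
    rcases eq_or_lt_of_le hij with rfl | hlt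
    · exact le_rfl
    · rw [List.getD_eq_getElem L 0 (lt_of_le_of_lt hij hj), List.getD_eq_getElem L 0 hj]
      exact List.pairwise_iff_getElem.1 hsort i j (lt_of_le_of_lt hij hj) hj hlt
  -- GE function
  set GE : EReal → ℝ := fun e => ∑ i, (D i {x : ℝ | (x:EReal) < e}).toReal with hGE
  have hGEnonneg : ∀ e, 0 ≤ GE e := fun e =>
    Finset.sum_nonneg fun i _ => ENNReal.toReal_nonneg
  have hGEle : ∀ e, GE e ≤ n := by
    intro e
    have h : GE e ≤ ∑ _i : Fin n, (1:ℝ) := by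
      refine Finset.sum_le_sum fun i _ => ?_
      haveI := hD i
      calc (D i {x : ℝ | (x:EReal) < e}).toReal ≤ (1 : ENNReal).toReal :=
            ENNReal.toReal_mono (by simp) prob_le_one
        _ = 1 := by simp
    simpa using h
  have hGEcoe : ∀ r : ℝ, GE (r:EReal) = cdfS D r := by
    intro r
    have hset : {x : ℝ | (x:EReal) < (r:EReal)} = Set.Iio r := by
      ext x; simp [EReal.coe_lt_coe_iff]
    rw [hGE]
    simp only [hset]
    unfold cdfS
    refine Finset.sum_congr rfl fun i _ => ?_
    have hu : Set.Iio r ∪ {r} = Set.Iic r := Set.Iio_union_right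
    rw [← hu, measure_union (by simp [Set.disjoint_singleton_right])
      (measurableSet_singleton r), hatom i r, add_zero]
  -- α ≤ β
  have hmul_k : (k:ℕ)*lam ≤ n*lam := Nat.mul_le_mul_right lam hkn'
  have hcomm : n*lam = lam*n := Nat.mul_comm n lam
  have hαβ : αe ≤ βe := by
    by_cases h0 : (k:ℕ) = 0
    · rw [hα]; simp [h0]
    · by_cases hknn : (k:ℕ) = n
      · rw [hβ]; simp [hknn]
      · rw [hα, hβ]
        simp only [h0, hknn, if_false]
        rw [EReal.coe_le_coe_iff]
        have hk1 : 1 ≤ (k:ℕ) := by omega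
        have hmul1 : 1*lam ≤ (k:ℕ)*lam := Nat.mul_le_mul_right lam hk1
        have hmul2 : ((k:ℕ)+1)*lam ≤ n*lam := Nat.mul_le_mul_right lam (by omega)
        have he1 : ((k:ℕ)+1)*lam = (k:ℕ)*lam + lam := by ring
        refine hle_getD _ _ (by omega) (by rw [hlen]; omega)
  have hAmeas : MeasurableSet A :=
    (measurableSet_ge_coe αe).inter (measurableSet_lt_coe βe)
  have hdecomp : GE βe = GE αe + W := by
    have hset : {x : ℝ | (x:EReal) < βe} = {x : ℝ | (x:EReal) < αe} ∪ A := by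
      ext x
      simp only [Set.mem_setOf_eq, Set.mem_union, hA]
      constructor
      · intro hx
        rcases lt_or_ge (x:EReal) αe with h | h
        · exact Or.inl h
        · exact Or.inr ⟨h, hx⟩
      · rintro (h | ⟨h1, h2⟩)
        · exact lt_of_lt_of_le h hαβ
        · exact h2
    have hper : ∀ i, (D i {x : ℝ | (x:EReal) < βe}).toReal
        = (D i {x : ℝ | (x:EReal) < αe}).toReal + (D i A).toReal := by
      intro i
      haveI := hD i
      rw [hset, measure_union ?hd hAmeas,
        ENNReal.toReal_add (measure_ne_top _ _) (measure_ne_top _ _)]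
      case hd =>
        rw [Set.disjoint_left]
        intro x hx hxA
        exact absurd hxA.1 (not_le.2 hx)
    calc GE βe = ∑ i, ((D i {x : ℝ | (x:EReal) < αe}).toReal + (D i A).toReal) :=
          Finset.sum_congr rfl fun i _ => hper i
      _ = GE αe + W := Finset.sum_add_distrib
  set a : ℕ := ⌊GE αe⌋₊ + 1 with ha
  set b : ℕ := min (n-1) (⌈GE βe⌉₊ - 1) with hb
  have hGEβbig : 22 < GE βe := by
    have := hGEnonneg αe; rw [hdecomp]; linarith
  have hbceil1 : 1 ≤ ⌈GE βe⌉₊ := Nat.one_le_ceil_iff.2 (by linarith)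
  have haR1 : GE αe < (a:ℝ) := by
    rw [ha]; push_cast; exact Nat.lt_floor_add_one _
  have haR2 : (a:ℝ) ≤ GE αe + 1 := by
    rw [ha]; push_cast
    have := Nat.floor_le (hGEnonneg αe); linarith
  have hbR1 : (b:ℝ) ≤ GE βe := by
    have h1 : ((⌈GE βe⌉₊ - 1 : ℕ):ℝ) ≤ GE βe := by
      rw [Nat.cast_sub hbceil1]
      have h2 := Nat.ceil_lt_add_one (le_of_lt (by linarith : (0:ℝ) < GE βe))
      push_cast
      linarith
    calc (b:ℝ) ≤ ((⌈GE βe⌉₊ - 1 : ℕ):ℝ) := by exact_mod_cast min_le_right _ _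
      _ ≤ GE βe := h1
  have hn1R : ((n-1:ℕ):ℝ) = (n:ℝ) - 1 := by
    rw [Nat.cast_sub (by omega)]; norm_num
  have hbR2 : GE βe - 1 ≤ (b:ℝ) := by
    rw [hb, Nat.cast_min]
    apply le_min
    · rw [hn1R]; have := hGEle βe; linarith
    · rw [Nat.cast_sub hbceil1]
      have := Nat.le_ceil (GE βe); push_cast; linarith
  have h1a : 1 ≤ a := by omega
  have hbn : (b:ℝ) ≤ (n:ℝ) - 1 := by
    calc (b:ℝ) ≤ ((n-1:ℕ):ℝ) := by exact_mod_cast min_le_left _ _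
      _ = (n:ℝ) - 1 := hn1R
  have hab20 : a + 20 ≤ b := by
    have hr : (a:ℝ) + 20 ≤ (b:ℝ) := by
      have h1 : GE αe + 21 ≤ GE βe - 1 := by rw [hdecomp]; linarith
      linarith
    exact_mod_cast hr
  have haltn : (a:ℝ) < n := by
    have h1 : (a:ℝ) + 20 ≤ (b:ℝ) := by exact_mod_cast hab20
    linarith
  have h1b : 1 ≤ b := by omega
  have hQa_lb : ∀ r : ℝ, αe = (r:EReal) → r ≤ quant D a := by
    intro r hr
    have hcr : cdfS D r < (a:ℝ) := by rw [← hGEcoe, ← hr]; exact haR1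
    refine le_csInf (Sne D hD haltn) fun s hs => ?_
    simp only [Set.mem_setOf_eq] at hs
    by_contra hlt
    push_neg at hlt
    have := cdfS_mono D hD hlt.le
    linarith
  have hQb_ub : ∀ r : ℝ, βe = (r:EReal) → quant D b ≤ r := by
    intro r hr
    refine csInf_le (Sbdd D hD h1b) ?_
    simp only [Set.mem_setOf_eq]
    rw [← hGEcoe, ← hr]
    exact hbR1
  have hcount := hgood a b h1a hbn hab20
  rw [sum_indicator_eq_countP, ← hL] at hcount
  set cnt : ℕ := L.countP (fun y => decide (y ∈ Set.Ioo (quant D a) (quant D b))) with hcnt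
  have hfinal : cnt ≤ lam := by
    by_cases h0 : (k:ℕ) = 0
    · have hkne : ¬((k:ℕ) = n) := by omega
      have hβ' : βe = ((L.getD (((k:ℕ)+1)*lam - 1) 0 : ℝ) : EReal) := by
        rw [hβ, if_neg hkne]
      set j0 : ℕ := ((k:ℕ)+1)*lam - 1 with hj0
      have hlamlamn : lam*1 ≤ lam*n := Nat.mul_le_mul_left lam (by omega)
      have hj0len : j0 < L.length := by
        rw [hlen, hj0, h0]; omega
      have hmono : cnt ≤ L.countP (fun y => decide (y < L.getD j0 0)) := by
        rw [hcnt]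
        refine List.countP_mono_left fun y hy hmem => ?_
        simp only [decide_eq_true_eq] at hmem ⊢
        have h2 : quant D b ≤ L.getD j0 0 := hQb_ub _ hβ'
        exact lt_of_lt_of_le hmem.2 h2
      have hc := countP_lt_le hsort hj0len
      have hj0lam : j0 ≤ lam := by rw [hj0, h0]; omega
      omega
    · by_cases hknn : (k:ℕ) = n
      · have hα' : αe = ((L.getD ((k:ℕ)*lam - 1) 0 : ℝ) : EReal) := by
          rw [hα, if_neg h0]
        set i0 : ℕ := (k:ℕ)*lam - 1 with hi0
        have hone : 1*1 ≤ n*lam := Nat.mul_le_mul (by omega) hlam1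
        have hi0len : i0 < L.length := by
          rw [hlen, hi0, hknn]; omega
        have hmono : cnt ≤ L.countP (fun y => decide (L.getD i0 0 < y)) := by
          rw [hcnt]
          refine List.countP_mono_left fun y hy hmem => ?_
          simp only [decide_eq_true_eq] at hmem ⊢
          have h2 : L.getD i0 0 ≤ quant D a := hQa_lb _ hα'
          exact lt_of_le_of_lt h2 hmem.1
        have hc := countP_gt_le hsort hi0len
        have hz : L.length - i0 - 1 ≤ lam := by
          rw [hlen, hi0, hknn]; omega
        omega
      · have hα' : αe = ((L.getD ((k:ℕ)*lam - 1) 0 : ℝ) : EReal) := by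
          rw [hα, if_neg h0]
        have hβ' : βe = ((L.getD (((k:ℕ)+1)*lam - 1) 0 : ℝ) : EReal) := by
          rw [hβ, if_neg hknn]
        set i0 : ℕ := (k:ℕ)*lam - 1 with hi0
        set j0 : ℕ := ((k:ℕ)+1)*lam - 1 with hj0
        have hk1 : 1 ≤ (k:ℕ) := by omega
        have hmul1 : 1*lam ≤ (k:ℕ)*lam := Nat.mul_le_mul_right lam hk1
        have hmul2 : ((k:ℕ)+1)*lam ≤ n*lam := Nat.mul_le_mul_right lam (by omega)
        have he1 : ((k:ℕ)+1)*lam = (k:ℕ)*lam + lam := by ring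
        have hi0len : i0 < L.length := by rw [hlen, hi0]; omega
        have hj0len : j0 < L.length := by rw [hlen, hj0]; omega
        have hij : i0 < j0 := by rw [hi0, hj0]; omega
        have hmono : cnt ≤ L.countP
            (fun y => decide (L.getD i0 0 < y ∧ y < L.getD j0 0)) := by
          rw [hcnt]
          refine List.countP_mono_left fun y hy hmem => ?_
          simp only [decide_eq_true_eq] at hmem ⊢
          exact ⟨lt_of_le_of_lt (hQa_lb _ hα') hmem.1,
            lt_of_lt_of_le hmem.2 (hQb_ub _ hβ')⟩
        have hc := countP_between_le hsort hi0len hj0len hij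
        have hz : j0 - i0 - 1 ≤ lam := by rw [hi0, hj0]; omega
        omega
  have hcast : (cnt:ℝ) ≤ (lam:ℝ) := by exact_mod_cast hfinal
  linarith

private lemma moment_bounds {n : ℕ} (D : Fin n → Measure ℝ)
    (hD : ∀ i, IsProbabilityMeasure (D i)) (A : Set ℝ) (hA : MeasurableSet A) :
    (∫ ωx : Fin n → ℝ, ((Set.ncard {i : Fin n | ωx i ∈ A} : ℝ)) ∂(Measure.pi D))
        = ∑ i, (D i A).toReal ∧
    (∫ ωx : Fin n → ℝ, ((Set.ncard {i : Fin n | ωx i ∈ A} : ℝ)) ^ 2 ∂(Measure.pi D)) ≤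
      (∑ i, (D i A).toReal) + (∑ i, (D i A).toReal) ^ 2 := by
  classical
  haveI := fun i => hD i
  set g : ℝ → ℝ := A.indicator (fun _ => (1:ℝ)) with hg
  set q : Fin n → ℝ := fun i => (D i A).toReal with hq
  have hqnn : ∀ i, 0 ≤ q i := fun i => ENNReal.toReal_nonneg
  have hgint : ∀ i : Fin n, Integrable g (D i) := fun i => (integrable_const 1).indicator hA
  have hgsq : ∀ y, g y * g y = g y := by
    intro y; by_cases h : y ∈ A <;> simp [hg, h]
  have hncard : ∀ ωx : Fin n → ℝ,
      ((Set.ncard {i : Fin n | ωx i ∈ A} : ℝ)) = ∑ i, g (ωx i) := by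
    intro ωx
    have h1 : {i : Fin n | ωx i ∈ A}.ncard
        = (Finset.univ.filter (fun i => ωx i ∈ A)).card := by
      rw [Set.ncard_eq_toFinset_card']
      congr 1
      ext i
      simp
    rw [h1, Finset.card_filter]
    push_cast
    refine Finset.sum_congr rfl fun i _ => ?_
    by_cases h : ωx i ∈ A <;> simp [hg, h]
  -- single-coordinate functions
  set f1 : Fin n → Fin n → ℝ → ℝ := fun i t => if t = i then g else fun _ => 1 with hf1
  have hf1prod : ∀ (i : Fin n) (x : Fin n → ℝ), (∏ t, f1 i t (x t)) = g (x i) := by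
    intro i x
    have hstep : ∀ t, f1 i t (x t) = if t = i then g (x t) else 1 := by
      intro t; by_cases h : t = i <;> simp [hf1, h]
    rw [Finset.prod_congr rfl fun t _ => hstep t,
      Finset.prod_ite_eq' Finset.univ i (fun t => g (x t))]
    simp
  have hf1int : ∀ i t, Integrable (f1 i t) (D t) := by
    intro i t
    by_cases h : t = i
    · simpa [hf1, h] using hgint t
    · simpa [hf1, h] using integrable_const (1:ℝ)
  have hcoordint : ∀ i, Integrable (fun x : Fin n → ℝ => g (x i)) (Measure.pi D) :=
    fun i => (pi_integrable D hD (f1 i) (hf1int i)).congr (ae_of_all _ fun x => hf1prod i x)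
  have hgval : ∀ i : Fin n, ∫ y, g y ∂(D i) = q i := by
    intro i
    rw [hg, integral_indicator_const _ hA]
    simp [hq, Measure.real]
  have hcoordval : ∀ i, ∫ x : Fin n → ℝ, g (x i) ∂(Measure.pi D) = q i := by
    intro i
    have h1 : ∫ x : Fin n → ℝ, g (x i) ∂(Measure.pi D)
        = ∫ x : Fin n → ℝ, ∏ t, f1 i t (x t) ∂(Measure.pi D) :=
      integral_congr_ae (ae_of_all _ fun x => (hf1prod i x).symm)
    rw [h1, pi_integral D hD]
    have hfac : ∀ t, ∫ y, f1 i t y ∂(D t) = if t = i then q t else 1 := by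
      intro t
      by_cases h : t = i
      · subst h
        simpa [hf1] using hgval t
      · simp only [hf1, if_neg h]
        simp [integral_const, measure_univ]
    rw [Finset.prod_congr rfl fun t _ => hfac t,
      Finset.prod_ite_eq' Finset.univ i (fun t => q t)]
    simp
  -- first moment
  have hm1 : (∫ ωx : Fin n → ℝ, ((Set.ncard {i : Fin n | ωx i ∈ A} : ℝ)) ∂(Measure.pi D))
      = ∑ i, q i := by
    rw [integral_congr_ae (ae_of_all _ fun ωx => hncard ωx),
      integral_finset_sum _ (fun i _ => hcoordint i)]
    exact Finset.sum_congr rfl fun i _ => hcoordval i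
  -- pair functions
  set f2 : Fin n → Fin n → Fin n → ℝ → ℝ :=
    fun i j t => if t = i then g else if t = j then g else fun _ => 1 with hf2
  have hf2int : ∀ i j t, Integrable (f2 i j t) (D t) := by
    intro i j t
    by_cases h1 : t = i
    · simpa [hf2, h1] using hgint t
    · by_cases h2 : t = j
      · simpa [hf2, h1, h2] using hgint t
      · simpa [hf2, h1, h2] using integrable_const (1:ℝ)
  have hf2prod : ∀ (i j : Fin n), i ≠ j → ∀ x : Fin n → ℝ,
      (∏ t, f2 i j t (x t)) = g (x i) * g (x j) := by
    intro i j hij x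
    have hsub : ({i, j} : Finset (Fin n)) ⊆ Finset.univ := Finset.subset_univ _
    have hout : ∀ t ∈ Finset.univ, t ∉ ({i, j} : Finset (Fin n)) → f2 i j t (x t) = 1 := by
      intro t _ ht
      simp only [Finset.mem_insert, Finset.mem_singleton] at ht
      push_neg at ht
      simp [hf2, ht.1, ht.2]
    rw [← Finset.prod_subset hsub hout, Finset.prod_pair hij]
    have hji : ¬(j = i) := fun h => hij h.symm
    simp [hf2, hji]
  have hpairint : ∀ i j : Fin n,
      Integrable (fun x : Fin n → ℝ => g (x i) * g (x j)) (Measure.pi D) := by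
    intro i j
    by_cases hij : i = j
    · subst hij
      exact (hcoordint i).congr (ae_of_all _ fun x => (hgsq (x i)).symm)
    · exact (pi_integrable D hD (f2 i j) (hf2int i j)).congr
        (ae_of_all _ fun x => hf2prod i j hij x)
  have hpairval : ∀ i j : Fin n,
      (∫ x : Fin n → ℝ, g (x i) * g (x j) ∂(Measure.pi D))
        = if i = j then q i else q i * q j := by
    intro i j
    by_cases hij : i = j
    · subst hij
      rw [if_pos rfl, ← hcoordval i]
      exact integral_congr_ae (ae_of_all _ fun x => hgsq (x i))
    · rw [if_neg hij]
      have h1 : (∫ x : Fin n → ℝ, g (x i) * g (x j) ∂(Measure.pi D))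
          = ∫ x : Fin n → ℝ, ∏ t, f2 i j t (x t) ∂(Measure.pi D) :=
        integral_congr_ae (ae_of_all _ fun x => (hf2prod i j hij x).symm)
      rw [h1, pi_integral D hD]
      have hfac : ∀ t : Fin n, ∫ y, f2 i j t y ∂(D t)
          = if t = i then q t else if t = j then q t else 1 := by
        intro t
        by_cases h1 : t = i
        · have he : f2 i j t = g := by simp [hf2, h1]
          rw [he, hgval t, if_pos h1]
        · by_cases h2 : t = j
          · have he : f2 i j t = g := by simp [hf2, h1, h2]
            rw [he, hgval t, if_neg h1, if_pos h2]
          · have he : f2 i j t = fun _ => (1:ℝ) := by simp [hf2, h1, h2]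
            rw [he, if_neg h1, if_neg h2]
            simp [measure_univ]
      rw [Finset.prod_congr rfl fun t _ => hfac t]
      have hsub : ({i, j} : Finset (Fin n)) ⊆ Finset.univ := Finset.subset_univ _
      have hout : ∀ t ∈ Finset.univ, t ∉ ({i, j} : Finset (Fin n)) →
          (if t = i then q t else if t = j then q t else 1) = 1 := by
        intro t _ ht
        simp only [Finset.mem_insert, Finset.mem_singleton] at ht
        push_neg at ht
        simp [ht.1, ht.2]
      have hji : ¬(j = i) := fun h => hij h.symm
      rw [← Finset.prod_subset hsub hout, Finset.prod_pair hij]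
      simp [hji]
  -- second moment
  have hm2 : (∫ ωx : Fin n → ℝ, ((Set.ncard {i : Fin n | ωx i ∈ A} : ℝ)) ^ 2 ∂(Measure.pi D))
      = ∑ i, ∑ j, (if i = j then q i else q i * q j) := by
    have hsq : ∀ ωx : Fin n → ℝ, ((Set.ncard {i : Fin n | ωx i ∈ A} : ℝ)) ^ 2
        = ∑ i, ∑ j, g (ωx i) * g (ωx j) := by
      intro ωx
      rw [hncard, sq, Finset.sum_mul_sum]
    rw [integral_congr_ae (ae_of_all _ hsq),
      integral_finset_sum _ (fun i _ => integrable_finset_sum _ (fun j _ => hpairint i j))]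
    refine Finset.sum_congr rfl fun i _ => ?_
    rw [integral_finset_sum _ (fun j _ => hpairint i j)]
    exact Finset.sum_congr rfl fun j _ => hpairval i j
  refine ⟨hm1, ?_⟩
  rw [hm2]
  have hbound : ∀ i j : Fin n, (if i = j then q i else q i * q j)
      ≤ (if i = j then q i else 0) + q i * q j := by
    intro i j
    by_cases h : i = j
    · subst h
      rw [if_pos rfl, if_pos rfl]
      nlinarith [hqnn i]
    · simp [h]
  calc ∑ i, ∑ j, (if i = j then q i else q i * q j)
      ≤ ∑ i, ∑ j, ((if i = j then q i else 0) + q i * q j) :=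
        Finset.sum_le_sum fun i _ => Finset.sum_le_sum fun j _ => hbound i j
    _ = (∑ i, ∑ j, (if i = j then q i else 0)) + ∑ i, ∑ j, q i * q j := by
        rw [← Finset.sum_add_distrib]
        exact Finset.sum_congr rfl fun i _ => Finset.sum_add_distrib
    _ = (∑ i, q i) + (∑ i, q i) ^ 2 := by
        congr 1
        · refine Finset.sum_congr rfl fun i _ => ?_
          rw [Finset.sum_ite_eq Finset.univ i (fun _ => q i)]
          simp
        · rw [sq, Finset.sum_mul_sum]


/-- The `V`-list lemma: there is a universal constant `C` such that for any `n ≥ 2` and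
atomless distributions `D₁, …, Dₙ` on `ℝ`, if we sample `λ·n` independent values
(`λ = ⌈log₂ n⌉` samples from each `Dᵢ`), sort them into `u₁ ≤ ⋯ ≤ u_{λn}`, and take
`v_k = u_{kλ}` (`v₀ = −∞`, `v_{n+1} = +∞`), then with probability at least `1 − n⁻²`
over the samples, for every `0 ≤ k ≤ n` the group
`Z_k = {i : v_k ≤ x_i < v_{k+1}}` of a fresh independent input `x ∼ ∏ᵢ Dᵢ` satisfies
`E[|Z_k|] ≤ C` and `E[|Z_k|²] ≤ C`. -/
theorem stmt4 :
    ∃ C : ℝ, 0 < C ∧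
      ∀ (n : ℕ), 2 ≤ n →
      ∀ (D : Fin n → Measure ℝ),
        (∀ i, IsProbabilityMeasure (D i)) →
        (∀ i (r : ℝ), D i {r} = 0) →
      ∀ (lam : ℕ), lam = ⌈Real.logb 2 n⌉₊ →
      ∀ (v : (Fin lam × Fin n → ℝ) → Fin (n + 2) → EReal),
        (∀ ωs k, v ωs k =
          if (k : ℕ) = 0 then (⊥ : EReal)
          else if (k : ℕ) = n + 1 then (⊤ : EReal)
          else ((((Finset.univ.val.map ωs).sort (· ≤ ·)).getD ((k : ℕ) * lam - 1) 0 : ℝ) : EReal)) →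
      1 - ((n : ℝ) ^ 2)⁻¹ ≤
        ((Measure.pi (fun p : Fin lam × Fin n => D p.2)) {ωs | ∀ k : Fin (n + 1),
          (∫ ωx, ((Set.ncard {i : Fin n | v ωs k.castSucc ≤ (ωx i : EReal) ∧
              (ωx i : EReal) < v ωs k.succ} : ℝ)) ∂(Measure.pi D)) ≤ C ∧
          (∫ ωx, ((Set.ncard {i : Fin n | v ωs k.castSucc ≤ (ωx i : EReal) ∧
              (ωx i : EReal) < v ωs k.succ} : ℝ)) ^ 2 ∂(Measure.pi D)) ≤ C}).toReal := by
  classical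
  refine ⟨600, by norm_num, ?_⟩
  intro n hn D hD hatom lam hlam v hv
  haveI := fun i => hD i
  set μs := Measure.pi (fun p : Fin lam × Fin n => D p.2) with hμs
  haveI : ∀ p : Fin lam × Fin n, IsProbabilityMeasure (D p.2) := fun p => hD p.2
  haveI : IsProbabilityMeasure μs := by rw [hμs]; infer_instance
  have hn0 : (0:ℝ) < n := by positivity
  have hn1 : (1:ℝ) < n := by exact_mod_cast hn
  have hn2R : (2:ℝ) ≤ n := by exact_mod_cast hn
  have hlam1 : 1 ≤ lam := by
    rw [hlam, Nat.one_le_ceil_iff]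
    exact Real.logb_pos (by norm_num) hn1
  have hlam0R : (0:ℝ) ≤ lam := by positivity
  have hlog2pos : (0:ℝ) < Real.log 2 := Real.log_pos (by norm_num)
  have hloglam : Real.log n ≤ (lam:ℝ) * Real.log 2 := by
    have h1 : Real.logb 2 n ≤ (lam:ℝ) := by rw [hlam]; exact Nat.le_ceil _
    have h2 : Real.logb 2 n * Real.log 2 = Real.log n := by
      rw [Real.logb]; field_simp
    calc Real.log n = Real.logb 2 n * Real.log 2 := h2.symm
      _ ≤ (lam:ℝ) * Real.log 2 := by
          exact mul_le_mul_of_nonneg_right h1 hlog2pos.le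
  -- the bad events
  set X : ℕ → ℕ → (Fin lam × Fin n → ℝ) → ℝ := fun a b ωs =>
    ∑ p : Fin lam × Fin n,
      (Set.Ioo (quant D a) (quant D b)).indicator (fun _ => (1:ℝ)) (ωs p) with hX
  set T : ℕ → ℕ → Set (Fin lam × Fin n → ℝ) := fun a b =>
    {ωs | (1 ≤ a ∧ (b:ℝ) ≤ (n:ℝ) - 1 ∧ a + 20 ≤ b) ∧ X a b ωs ≤ (lam:ℝ)} with hT
  set Bad : Set (Fin lam × Fin n → ℝ) :=
    ⋃ a ∈ Finset.range (n+1), ⋃ b ∈ Finset.range (n+1), T a b with hBad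
  have hXmeas : ∀ a b, Measurable (X a b) := by
    intro a b
    rw [hX]
    refine Finset.measurable_sum _ fun p _ => ?_
    exact (measurable_const.indicator measurableSet_Ioo).comp (measurable_pi_apply p)
  have hTmeas : ∀ a b, MeasurableSet (T a b) := by
    intro a b
    by_cases hc : (1 ≤ a ∧ (b:ℝ) ≤ (n:ℝ) - 1 ∧ a + 20 ≤ b)
    · have he : T a b = {ωs | X a b ωs ≤ (lam:ℝ)} := by
        ext ωs; simp [hT, hc]
      rw [he]
      exact measurableSet_le (hXmeas a b) measurable_const
    · have he : T a b = ∅ := by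
        ext ωs; simp [hT, hc]
      rw [he]; exact MeasurableSet.empty
  have hBadmeas : MeasurableSet Bad := by
    rw [hBad]
    exact MeasurableSet.biUnion (Finset.range (n+1)).countable_toSet fun a _ =>
      MeasurableSet.biUnion (Finset.range (n+1)).countable_toSet fun b _ => hTmeas a b
  -- Chernoff bound per pair
  have hTbound : ∀ a b : ℕ, μs (T a b) ≤ ENNReal.ofReal (((n:ℝ)^6)⁻¹) := by
    intro a b
    by_cases hc : (1 ≤ a ∧ (b:ℝ) ≤ (n:ℝ) - 1 ∧ a + 20 ≤ b)
    · obtain ⟨h1a, hbn, hab⟩ := hc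
      have hb_lt : (b:ℝ) < n := by linarith
      have hab' : a < b := by omega
      have habR : (a:ℝ) + 20 ≤ (b:ℝ) := by exact_mod_cast hab
      have hweight := ioo_weight D hD hatom h1a hab' hb_lt
      set I : Set ℝ := Set.Ioo (quant D a) (quant D b) with hI
      have hch := chernoff_bound (fun p : Fin lam × Fin n => D p.2)
        (fun p => hD p.2) I measurableSet_Ioo (lam:ℝ)
      have hsump : (∑ p : Fin lam × Fin n, (D p.2 I).toReal)
          = (lam:ℝ) * ∑ i, (D i I).toReal := by
        calc (∑ p : Fin lam × Fin n, (D p.2 I).toReal)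
            = ∑ _x : Fin lam, ∑ i : Fin n, ((D i) I).toReal :=
              Fintype.sum_prod_type _
          _ = (lam:ℝ) * ∑ i, (D i I).toReal := by
              rw [Finset.sum_const, Finset.card_univ, Fintype.card_fin, nsmul_eq_mul]
      have hS20 : (20:ℝ) ≤ ∑ i, (D i I).toReal := by linarith
      have hexp_le : Real.log 2 * (lam:ℝ)
          - ((∑ p : Fin lam × Fin n, (D p.2 I).toReal)) / 2 ≤ -(6 * Real.log n) := by
        rw [hsump]
        have hlog2_lt : Real.log 2 < 0.7 := by
          have := Real.log_two_lt_d9; linarith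
        have h1 : (lam:ℝ) * (∑ i, (D i I).toReal) / 2 ≥ 10 * lam := by
          have := mul_le_mul_of_nonneg_left hS20 hlam0R
          linarith
        have h2 : 6 * Real.log n ≤ (lam:ℝ) * (10 - Real.log 2) - Real.log 2 * lam := by
          have h3 : 6 * Real.log n ≤ 6 * ((lam:ℝ) * Real.log 2) := by linarith
          have h4 : 7 * Real.log 2 ≤ 10 := by linarith
          have h5 : (lam:ℝ) * (7 * Real.log 2) ≤ (lam:ℝ) * 10 :=
            mul_le_mul_of_nonneg_left h4 hlam0R
          nlinarith
        nlinarith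
      have hIntoReal : (μs (T a b)).toReal ≤ ((n:ℝ)^6)⁻¹ := by
        have hsub : T a b ⊆ {ωs | X a b ωs ≤ (lam:ℝ)} := fun ωs hωs => hωs.2
        have h1 : (μs (T a b)).toReal ≤ (μs {ωs | X a b ωs ≤ (lam:ℝ)}).toReal :=
          ENNReal.toReal_mono (measure_ne_top _ _) (measure_mono hsub)
        have h2 : (μs {ωs | X a b ωs ≤ (lam:ℝ)}).toReal
            ≤ Real.exp (Real.log 2 * (lam:ℝ)
              - ((∑ p : Fin lam × Fin n, (D p.2 I).toReal)) / 2) := hch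
        have h3 : Real.exp (Real.log 2 * (lam:ℝ)
              - ((∑ p : Fin lam × Fin n, (D p.2 I).toReal)) / 2)
            ≤ Real.exp (-(6 * Real.log n)) := Real.exp_le_exp.2 hexp_le
        have h4 : Real.exp (-(6 * Real.log n)) = ((n:ℝ)^6)⁻¹ := by
          rw [Real.exp_neg]
          congr 1
          rw [show (6:ℝ) * Real.log n = ((6:ℕ):ℝ) * Real.log n by norm_num,
            Real.exp_nat_mul, Real.exp_log hn0]
        linarith
      rw [← ENNReal.le_ofReal_iff_toReal_le (measure_ne_top _ _) (by positivity)] at hIntoReal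
      exact hIntoReal
    · have he : T a b = ∅ := by ext ωs; simp [hT, hc]
      rw [he]
      simp
  -- union bound
  have hBadBound : μs Bad ≤ ENNReal.ofReal (((n:ℝ)^2)⁻¹) := by
    have h1 : μs Bad ≤ ∑ a ∈ Finset.range (n+1), ∑ b ∈ Finset.range (n+1), μs (T a b) := by
      rw [hBad]
      calc μs (⋃ a ∈ Finset.range (n+1), ⋃ b ∈ Finset.range (n+1), T a b)
          ≤ ∑ a ∈ Finset.range (n+1), μs (⋃ b ∈ Finset.range (n+1), T a b) :=
            measure_biUnion_finset_le _ _
        _ ≤ ∑ a ∈ Finset.range (n+1), ∑ b ∈ Finset.range (n+1), μs (T a b) :=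
            Finset.sum_le_sum fun a _ => measure_biUnion_finset_le _ _
    have h2 : ∑ a ∈ Finset.range (n+1), ∑ b ∈ Finset.range (n+1), μs (T a b)
        ≤ ((n+1 : ℕ) : ENNReal) * (((n+1 : ℕ) : ENNReal) * ENNReal.ofReal (((n:ℝ)^6)⁻¹)) := by
      calc ∑ a ∈ Finset.range (n+1), ∑ b ∈ Finset.range (n+1), μs (T a b)
          ≤ ∑ _a ∈ Finset.range (n+1), ((n+1 : ℕ) : ENNReal) * ENNReal.ofReal (((n:ℝ)^6)⁻¹) := by
            refine Finset.sum_le_sum fun a _ => ?_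
            calc ∑ b ∈ Finset.range (n+1), μs (T a b)
                ≤ ∑ _b ∈ Finset.range (n+1), ENNReal.ofReal (((n:ℝ)^6)⁻¹) :=
                  Finset.sum_le_sum fun b _ => hTbound a b
              _ = ((n+1 : ℕ) : ENNReal) * ENNReal.ofReal (((n:ℝ)^6)⁻¹) := by
                  rw [Finset.sum_const, Finset.card_range, nsmul_eq_mul]
        _ = ((n+1 : ℕ) : ENNReal) * (((n+1 : ℕ) : ENNReal) * ENNReal.ofReal (((n:ℝ)^6)⁻¹)) := by
            rw [Finset.sum_const, Finset.card_range, nsmul_eq_mul]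
    have h3 : ((n+1 : ℕ) : ENNReal) * (((n+1 : ℕ) : ENNReal) * ENNReal.ofReal (((n:ℝ)^6)⁻¹))
        ≤ ENNReal.ofReal (((n:ℝ)^2)⁻¹) := by
      rw [← ENNReal.ofReal_natCast (n+1), ← ENNReal.ofReal_mul (by positivity),
        ← ENNReal.ofReal_mul (by positivity)]
      refine ENNReal.ofReal_le_ofReal ?_
      have hcast : ((n+1 : ℕ) : ℝ) = (n:ℝ) + 1 := by push_cast; ring
      rw [hcast]
      have hsq : (n:ℝ) + 1 ≤ (n:ℝ)^2 := by nlinarith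
      have h4 : ((n:ℝ) + 1)^2 ≤ ((n:ℝ)^2)^2 :=
        pow_le_pow_left₀ (by positivity) hsq 2
      have key : ((n:ℝ)^2)⁻¹ = (n:ℝ)^4 * ((n:ℝ)^6)⁻¹ := by
        field_simp
      calc ((n:ℝ)+1) * (((n:ℝ)+1) * ((n:ℝ)^6)⁻¹) = ((n:ℝ)+1)^2 * ((n:ℝ)^6)⁻¹ := by ring
        _ ≤ (n:ℝ)^4 * ((n:ℝ)^6)⁻¹ := by
            refine mul_le_mul_of_nonneg_right ?_ (by positivity)
            calc ((n:ℝ)+1)^2 ≤ ((n:ℝ)^2)^2 := h4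
              _ = (n:ℝ)^4 := by ring
        _ = ((n:ℝ)^2)⁻¹ := key.symm
    exact le_trans h1 (le_trans h2 h3)
  -- the good event implies the conclusion
  set S : Set (Fin lam × Fin n → ℝ) := {ωs | ∀ k : Fin (n + 1),
      (∫ ωx, ((Set.ncard {i : Fin n | v ωs k.castSucc ≤ (ωx i : EReal) ∧
          (ωx i : EReal) < v ωs k.succ} : ℝ)) ∂(Measure.pi D)) ≤ (600:ℝ) ∧
      (∫ ωx, ((Set.ncard {i : Fin n | v ωs k.castSucc ≤ (ωx i : EReal) ∧
          (ωx i : EReal) < v ωs k.succ} : ℝ)) ^ 2 ∂(Measure.pi D)) ≤ (600:ℝ)} with hS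
  have hsub : Badᶜ ⊆ S := by
    intro ωs hωs
    have hgood : ∀ a b : ℕ, 1 ≤ a → (b:ℝ) ≤ (n:ℝ) - 1 → a + 20 ≤ b →
        (lam:ℝ) < X a b ωs := by
      intro a b h1 h2 h3
      by_contra hle
      push_neg at hle
      apply hωs
      rw [hBad]
      have hbmem : b ∈ Finset.range (n+1) := by
        have : (b:ℝ) + 1 ≤ (n:ℝ) := by linarith
        have : b + 1 ≤ n := by exact_mod_cast this
        simp only [Finset.mem_range]
        omega
      have hamem : a ∈ Finset.range (n+1) := by
        simp only [Finset.mem_range] at hbmem ⊢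
        omega
      refine Set.mem_biUnion hamem (Set.mem_biUnion hbmem ?_)
      exact ⟨⟨h1, h2, h3⟩, hle⟩
    intro k
    set A : Set ℝ := {x : ℝ | v ωs k.castSucc ≤ (x:EReal) ∧ (x:EReal) < v ωs k.succ} with hA
    have hAmeas : MeasurableSet A :=
      (measurableSet_ge_coe _).inter (measurableSet_lt_coe _)
    have hWb : ∑ i, (D i A).toReal ≤ 22 := det_bound hn hlam1 D hD hatom v hv ωs hgood k
    have hWnn : 0 ≤ ∑ i, (D i A).toReal :=
      Finset.sum_nonneg fun i _ => ENNReal.toReal_nonneg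
    have hmom := moment_bounds D hD A hAmeas
    constructor
    · calc (∫ ωx, ((Set.ncard {i : Fin n | v ωs k.castSucc ≤ (ωx i : EReal) ∧
            (ωx i : EReal) < v ωs k.succ} : ℝ)) ∂(Measure.pi D)) = ∑ i, (D i A).toReal :=
          hmom.1
        _ ≤ 600 := by linarith
    · calc (∫ ωx, ((Set.ncard {i : Fin n | v ωs k.castSucc ≤ (ωx i : EReal) ∧
            (ωx i : EReal) < v ωs k.succ} : ℝ)) ^ 2 ∂(Measure.pi D))
          ≤ (∑ i, (D i A).toReal) + (∑ i, (D i A).toReal) ^ 2 := hmom.2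
        _ ≤ 600 := by nlinarith
  -- wrap up
  have hfinal1 : μs Badᶜ ≤ μs S := measure_mono hsub
  have hcompl : (μs Badᶜ).toReal = 1 - (μs Bad).toReal := by
    rw [measure_compl hBadmeas (measure_ne_top _ _), measure_univ,
      ENNReal.toReal_sub_of_le prob_le_one (by simp)]
    simp
  have hBadReal : (μs Bad).toReal ≤ ((n:ℝ)^2)⁻¹ := by
    have := ENNReal.toReal_mono (ENNReal.ofReal_ne_top) hBadBound
    rwa [ENNReal.toReal_ofReal (by positivity)] at this
  have hStoReal : (μs Badᶜ).toReal ≤ (μs S).toReal :=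
    ENNReal.toReal_mono (measure_ne_top _ _) hfinal1
  calc 1 - ((n:ℝ)^2)⁻¹ ≤ 1 - (μs Bad).toReal := by linarith
    _ = (μs Badᶜ).toReal := hcompl.symm
    _ ≤ (μs S).toReal := hStoReal
end

section
/- Let n ≥ 2, λ = ⌈log₂ n⌉, N = λ·n, and let D₁, …, Dₙ be Borel probability measures on ℝ. Let s₁, …, s_N be mutually independent real random variables where s_ℓ is distributed according to D_{i(ℓ)} with i(ℓ) = ((ℓ − 1) mod n) + 1. Then with probability at least 1 − n⁻², the following holds simultaneously for all pairs of distinct indices a, b ∈ {1, …, N} with s_a ≤ s_b: if the half-open interval [s_a, s_b) contains at most λ of the points {s_ℓ : ℓ ∉ {a, b}}, then ∑_{ℓ ∉ {a,b}} D_{i(ℓ)}([s_a, s_b)) ≤ 11·λ. -/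
open MeasureTheory
open scoped ENNReal

-- Chernoff-type lower-tail bound for the count of coordinates landing in `s`.
lemma chernoff_bound_s5 {ι : Type*} [Fintype ι] (μ : ι → Measure ℝ)
    [∀ i, IsProbabilityMeasure (μ i)] {s : Set ℝ} (hs : MeasurableSet s) (k : ℕ) :
    Measure.pi μ {f : ι → ℝ | Set.ncard {i | f i ∈ s} ≤ k}
      ≤ 2 ^ k * ENNReal.ofReal (Real.exp (-(∑ i, (μ i s).toReal) / 2)) := by
  classical
  set P : Finset (Finset ι) := Finset.univ.powerset.filter (fun T => T.card ≤ k) with hP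
  set C : Finset ι → Set (ι → ℝ) :=
    fun T => Set.pi Set.univ (fun i => if i ∈ T then s else sᶜ) with hC
  have hmemC : ∀ (T : Finset ι) (f : ι → ℝ), f ∈ C T ↔ ∀ i, (f i ∈ s ↔ i ∈ T) := by
    intro T f
    simp only [hC, Set.mem_pi, Set.mem_univ, forall_true_left]
    refine forall_congr' fun i => ?_
    by_cases hi : i ∈ T <;> simp [hi]
  have hset : ∀ f : ι → ℝ, ∀ T : Finset ι, f ∈ C T → {i | f i ∈ s} = (T : Set ι) := by
    intro f T hf
    ext i
    simpa using (hmemC T f).1 hf i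
  have hE : {f : ι → ℝ | Set.ncard {i | f i ∈ s} ≤ k} = ⋃ T ∈ P, C T := by
    ext f
    simp only [Set.mem_setOf_eq, Set.mem_iUnion, hP, Finset.mem_filter, Finset.mem_powerset]
    constructor
    · intro h
      refine ⟨Finset.univ.filter (fun i => f i ∈ s), ⟨Finset.subset_univ _, ?_⟩, ?_⟩
      · have : {i | f i ∈ s} = ((Finset.univ.filter (fun i => f i ∈ s) : Finset ι) : Set ι) := by
          ext i; simp
        rwa [this, Set.ncard_coe_finset] at h
      · rw [hmemC]; intro i; simp
    · rintro ⟨T, ⟨-, hTk⟩, hfT⟩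
      rw [hset f T hfT, Set.ncard_coe_finset]
      exact hTk
  have hmeas : ∀ T : Finset ι, MeasurableSet (C T) := by
    intro T
    refine MeasurableSet.univ_pi fun i => ?_
    by_cases hi : i ∈ T <;> simp [hi, hs, hs.compl]
  have hdisj : (P : Set (Finset ι)).PairwiseDisjoint C := by
    intro T₁ _ T₂ _ hne
    refine Set.disjoint_left.2 fun f hf1 hf2 => hne ?_
    have := (hset f T₁ hf1).symm.trans (hset f T₂ hf2)
    exact_mod_cast this
  rw [hE, measure_biUnion_finset hdisj (fun T _ => hmeas T)]
  have hfac : ∀ i, μ i s / 2 + μ i sᶜ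
      ≤ ENNReal.ofReal (Real.exp (-(μ i s).toReal / 2)) := by
    intro i
    have h1 : μ i s ≠ ⊤ := measure_ne_top _ _
    set p := (μ i s).toReal with hpdef
    have hp0 : (0:ℝ) ≤ p := ENNReal.toReal_nonneg
    have hp1 : p ≤ 1 := by
      have := ENNReal.toReal_mono (a := μ i s) (b := 1) (by norm_num) prob_le_one
      simpa using this
    have hμs : μ i s = ENNReal.ofReal p := (ENNReal.ofReal_toReal h1).symm
    have hμsc : μ i sᶜ = ENNReal.ofReal (1 - p) := by
      rw [prob_compl_eq_one_sub hs, hμs, ENNReal.ofReal_sub _ hp0, ENNReal.ofReal_one]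
    have hdiv : μ i s / 2 = ENNReal.ofReal (p / 2) := by
      rw [hμs, ENNReal.ofReal_div_of_pos (by norm_num), ENNReal.ofReal_ofNat]
    rw [hdiv, hμsc, ← ENNReal.ofReal_add (by linarith) (by linarith)]
    apply ENNReal.ofReal_le_ofReal
    have := Real.add_one_le_exp (-(p/2))
    rw [show -p/2 = -(p/2) by ring]
    linarith [this]
  calc ∑ T ∈ P, Measure.pi μ (C T)
      ≤ ∑ T ∈ P, 2 ^ k * ∏ i, (if i ∈ T then μ i s / 2 else μ i sᶜ) := by
        refine Finset.sum_le_sum fun T hT => ?_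
        have hTk : T.card ≤ k := (Finset.mem_filter.1 hT).2
        have hCT : Measure.pi μ (C T) = ∏ i, μ i (if i ∈ T then s else sᶜ) := by
          rw [hC]
          exact Measure.pi_pi μ _
        rw [hCT]
        have hterm : ∀ i, μ i (if i ∈ T then s else sᶜ)
            = (if i ∈ T then (2:ℝ≥0∞) else 1) * (if i ∈ T then μ i s / 2 else μ i sᶜ) := by
          intro i
          by_cases hi : i ∈ T <;> simp [hi]
          rw [ENNReal.mul_div_cancel' (by norm_num) (by norm_num)]
        rw [Finset.prod_congr rfl (fun i _ => hterm i), Finset.prod_mul_distrib]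
        have h2 : (∏ i, (if i ∈ T then (2:ℝ≥0∞) else 1)) = 2 ^ T.card := by
          rw [Finset.prod_ite_mem]
          simp [Finset.prod_const]
        rw [h2]
        exact mul_le_mul_left (pow_le_pow_right' (by norm_num : (1:ℝ≥0∞) ≤ 2) hTk) _
    _ ≤ ∑ T ∈ Finset.univ.powerset,
          2 ^ k * ∏ i, (if i ∈ T then μ i s / 2 else μ i sᶜ) := by
        refine Finset.sum_le_sum_of_subset ?_
        rw [hP]; exact Finset.filter_subset _ _
    _ = 2 ^ k * ∑ T ∈ Finset.univ.powerset, ∏ i, (if i ∈ T then μ i s / 2 else μ i sᶜ) := by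
        rw [Finset.mul_sum]
    _ = 2 ^ k * ∏ i, (μ i s / 2 + μ i sᶜ) := by
        congr 1
        rw [Finset.prod_add]
        refine Finset.sum_congr rfl fun T hT => ?_
        rw [← Finset.prod_sdiff (Finset.subset_univ T), mul_comm]
        congr 1
        · exact Finset.prod_congr rfl fun i hi => by simp [hi]
        · exact Finset.prod_congr rfl fun i hi => by simp [(Finset.mem_sdiff.1 hi).2]
    _ ≤ 2 ^ k * ∏ i, ENNReal.ofReal (Real.exp (-(μ i s).toReal / 2)) := by
        exact mul_le_mul_right (Finset.prod_le_prod' fun i _ => hfac i) _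
    _ = 2 ^ k * ENNReal.ofReal (Real.exp (-(∑ i, (μ i s).toReal) / 2)) := by
        congr 1
        rw [← ENNReal.ofReal_prod_of_nonneg (fun i _ => (Real.exp_pos _).le)]
        congr 1
        rw [← Real.exp_sum]
        congr 1
        rw [← Finset.sum_div, ← Finset.sum_neg_distrib]


lemma Ico_toReal_eq (μ : Measure ℝ) [IsProbabilityMeasure μ] (x y : ℝ) :
    (μ (Set.Ico x y)).toReal
      = max ((μ (Set.Iio y)).toReal - (μ (Set.Iio x)).toReal) 0 := by
  rcases le_or_gt x y with h | h
  · have hu : Set.Iio x ∪ Set.Ico x y = Set.Iio y := Set.Iio_union_Ico_eq_Iio h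
    have hd : Disjoint (Set.Iio x) (Set.Ico x y) := by
      rw [Set.disjoint_left]
      rintro t ht ⟨ht1, -⟩
      exact absurd ht1 (not_le.2 ht)
    have hadd := measure_union (μ := μ) hd measurableSet_Ico
    rw [hu] at hadd
    rw [hadd, ENNReal.toReal_add (measure_ne_top _ _) (measure_ne_top _ _)]
    rw [max_eq_left (by simp [ENNReal.toReal_nonneg])]
    ring
  · rw [Set.Ico_eq_empty (not_lt.2 h.le)]
    have hmono : (μ (Set.Iio y)).toReal ≤ (μ (Set.Iio x)).toReal :=
      ENNReal.toReal_mono (measure_ne_top _ _) (measure_mono (Set.Iio_subset_Iio h.le))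
    simp [max_eq_right (sub_nonpos.2 hmono)]

lemma pair_bound {N' : ℕ} (μ : Fin N' → Measure ℝ) [∀ i, IsProbabilityMeasure (μ i)]
    (lam : ℕ) (a b : Fin N') :
    Measure.pi μ {ω : Fin N' → ℝ | ω a ≤ ω b ∧
        Set.ncard {ℓ : Fin N' | ℓ ≠ a ∧ ℓ ≠ b ∧ ω ℓ ∈ Set.Ico (ω a) (ω b)} ≤ lam ∧
        (11 * lam : ℝ) < ∑ ℓ ∈ ({a, b}ᶜ : Finset (Fin N')),
          (μ ℓ (Set.Ico (ω a) (ω b))).toReal} ≤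
      2 ^ lam * ENNReal.ofReal (Real.exp (-(11 * lam) / 2)) := by
  classical
  set p : Fin N' → Prop := fun ℓ => ℓ = a ∨ ℓ = b with hp
  set e := MeasurableEquiv.piEquivPiSubtypeProd (fun _ : Fin N' => ℝ) p with he
  have hmp := measurePreserving_piEquivPiSubtypeProd μ p
  set X : ((∀ _ : Subtype p, ℝ) × (∀ _ : {i // ¬ p i}, ℝ)) → ℝ :=
    fun z => z.1 ⟨a, Or.inl rfl⟩ with hX
  set Y : ((∀ _ : Subtype p, ℝ) × (∀ _ : {i // ¬ p i}, ℝ)) → ℝ :=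
    fun z => z.1 ⟨b, Or.inr rfl⟩ with hY
  set E₂ : Set ((∀ _ : Subtype p, ℝ) × (∀ _ : {i // ¬ p i}, ℝ)) :=
    {z | X z ≤ Y z ∧
      Set.ncard {i : {i // ¬ p i} | z.2 i ∈ Set.Ico (X z) (Y z)} ≤ lam ∧
      (11 * lam : ℝ) < ∑ ℓ ∈ ({a, b}ᶜ : Finset (Fin N')),
        (μ ℓ (Set.Ico (X z) (Y z))).toReal} with hE₂
  -- the equivalence maps the event onto E₂
  have happ : ∀ (ω : Fin N' → ℝ), e ω = (fun i => ω i.1, fun i => ω i.1) := by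
    intro ω
    rfl
  have hncard : ∀ ω : Fin N' → ℝ,
      Set.ncard {i : {i // ¬ p i} | ω i.1 ∈ Set.Ico (ω a) (ω b)}
        = Set.ncard {ℓ : Fin N' | ℓ ≠ a ∧ ℓ ≠ b ∧ ω ℓ ∈ Set.Ico (ω a) (ω b)} := by
    intro ω
    rw [← Set.ncard_image_of_injective _ Subtype.val_injective]
    congr 1
    ext ℓ
    simp only [Set.mem_image, Set.mem_setOf_eq]
    constructor
    · rintro ⟨i, hmem, rfl⟩
      have hnp : ¬((i : Fin N') = a ∨ (i : Fin N') = b) := i.2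
      push_neg at hnp
      exact ⟨hnp.1, hnp.2, hmem⟩
    · rintro ⟨h1, h2, h3⟩
      exact ⟨⟨ℓ, not_or.2 ⟨h1, h2⟩⟩, h3, rfl⟩
  have hpre : {ω : Fin N' → ℝ | ω a ≤ ω b ∧
      Set.ncard {ℓ : Fin N' | ℓ ≠ a ∧ ℓ ≠ b ∧ ω ℓ ∈ Set.Ico (ω a) (ω b)} ≤ lam ∧
      (11 * lam : ℝ) < ∑ ℓ ∈ ({a, b}ᶜ : Finset (Fin N')),
        (μ ℓ (Set.Ico (ω a) (ω b))).toReal} = e ⁻¹' E₂ := by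
    ext ω
    simp only [Set.mem_preimage, hE₂, Set.mem_setOf_eq, happ ω, hX, hY]
    rw [hncard ω]
  -- measurability of E₂
  have hXm : Measurable X := (measurable_pi_apply _).comp measurable_fst
  have hYm : Measurable Y := (measurable_pi_apply _).comp measurable_fst
  have hFm : ∀ ℓ : Fin N', Measurable (fun t : ℝ => ((μ ℓ) (Set.Iio t)).toReal) := by
    intro ℓ
    refine Monotone.measurable fun u v huv => ?_
    exact ENNReal.toReal_mono (measure_ne_top _ _) (measure_mono (Set.Iio_subset_Iio huv))
  have hmassm : Measurable (fun z => ∑ ℓ ∈ ({a, b}ᶜ : Finset (Fin N')),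
      (μ ℓ (Set.Ico (X z) (Y z))).toReal) := by
    refine Finset.measurable_sum _ fun ℓ _ => ?_
    have : (fun z => (μ ℓ (Set.Ico (X z) (Y z))).toReal)
        = fun z => max (((μ ℓ) (Set.Iio (Y z))).toReal - ((μ ℓ) (Set.Iio (X z))).toReal) 0 := by
      funext z
      exact Ico_toReal_eq (μ ℓ) (X z) (Y z)
    rw [this]
    exact (((hFm ℓ).comp hYm).sub ((hFm ℓ).comp hXm)).max measurable_const
  have hcntm : MeasurableSet {z : ((∀ _ : Subtype p, ℝ) × (∀ _ : {i // ¬ p i}, ℝ)) |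
      Set.ncard {i : {i // ¬ p i} | z.2 i ∈ Set.Ico (X z) (Y z)} ≤ lam} := by
    have hrw : ∀ z : ((∀ _ : Subtype p, ℝ) × (∀ _ : {i // ¬ p i}, ℝ)),
        Set.ncard {i : {i // ¬ p i} | z.2 i ∈ Set.Ico (X z) (Y z)}
          = (Finset.univ.filter fun i : {i // ¬ p i} =>
              z.2 i ∈ Set.Ico (X z) (Y z)).card := by
      intro z
      rw [← Set.ncard_coe_finset]
      congr 1
      ext i
      simp
    simp only [hrw]
    have hc : Measurable (fun z : ((∀ _ : Subtype p, ℝ) × (∀ _ : {i // ¬ p i}, ℝ)) =>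
        (Finset.univ.filter fun i : {i // ¬ p i} => z.2 i ∈ Set.Ico (X z) (Y z)).card) := by
      simp only [Finset.card_filter]
      refine Finset.measurable_sum _ fun i _ => ?_
      have hIco : MeasurableSet {z : ((∀ _ : Subtype p, ℝ) × (∀ _ : {i // ¬ p i}, ℝ)) |
          z.2 i ∈ Set.Ico (X z) (Y z)} := by
        have hzi : Measurable (fun z : ((∀ _ : Subtype p, ℝ) × (∀ _ : {i // ¬ p i}, ℝ)) =>
            z.2 i) := (measurable_pi_apply _).comp measurable_snd
        have : {z : ((∀ _ : Subtype p, ℝ) × (∀ _ : {i // ¬ p i}, ℝ)) |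
            z.2 i ∈ Set.Ico (X z) (Y z)}
            = {z | X z ≤ z.2 i} ∩ {z | z.2 i < Y z} := by
          ext z
          simp only [Set.mem_Ico, Set.mem_setOf_eq, Set.mem_inter_iff]
        rw [this]
        exact (measurableSet_le hXm hzi).inter (measurableSet_lt hzi hYm)
      exact Measurable.ite hIco measurable_const measurable_const
    exact hc measurableSet_Iic
  have hmeasE₂ : MeasurableSet E₂ := by
    refine (measurableSet_le hXm hYm).inter (hcntm.inter ?_)
    exact measurableSet_lt measurable_const hmassm
  rw [hpre, hmp.measure_preimage hmeasE₂.nullMeasurableSet]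
  -- Fubini: integrate over the pair coordinates
  rw [Measure.prod_apply hmeasE₂]
  set B := (2:ℝ≥0∞) ^ lam * ENNReal.ofReal (Real.exp (-(11 * lam) / 2)) with hB
  have hslice : ∀ g : (∀ _ : Subtype p, ℝ),
      (Measure.pi fun i : {i // ¬ p i} => μ i.1) (Prod.mk g ⁻¹' E₂) ≤ B := by
    intro g
    set x := g ⟨a, Or.inl rfl⟩
    set y := g ⟨b, Or.inr rfl⟩
    have hslice_eq : Prod.mk g ⁻¹' E₂ = {f : (∀ _ : {i // ¬ p i}, ℝ) | x ≤ y ∧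
        Set.ncard {i : {i // ¬ p i} | f i ∈ Set.Ico x y} ≤ lam ∧
        (11 * lam : ℝ) < ∑ ℓ ∈ ({a, b}ᶜ : Finset (Fin N')),
          (μ ℓ (Set.Ico x y)).toReal} := rfl
    rw [hslice_eq]
    by_cases hcond : x ≤ y ∧
        (11 * lam : ℝ) < ∑ ℓ ∈ ({a, b}ᶜ : Finset (Fin N')), (μ ℓ (Set.Ico x y)).toReal
    · have hsub : {f : (∀ _ : {i // ¬ p i}, ℝ) | x ≤ y ∧
          Set.ncard {i : {i // ¬ p i} | f i ∈ Set.Ico x y} ≤ lam ∧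
          (11 * lam : ℝ) < ∑ ℓ ∈ ({a, b}ᶜ : Finset (Fin N')), (μ ℓ (Set.Ico x y)).toReal}
          ⊆ {f : (∀ _ : {i // ¬ p i}, ℝ) |
              Set.ncard {i : {i // ¬ p i} | f i ∈ Set.Ico x y} ≤ lam} :=
        fun f hf => hf.2.1
      refine (measure_mono hsub).trans ?_
      refine (chernoff_bound_s5 (fun i : {i // ¬ p i} => μ i.1) measurableSet_Ico lam).trans ?_
      rw [hB]
      refine mul_le_mul_right (ENNReal.ofReal_le_ofReal (Real.exp_le_exp.2 ?_)) _
      have hsum : ∑ i : {i // ¬ p i}, (μ i.1 (Set.Ico x y)).toReal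
          = ∑ ℓ ∈ ({a, b}ᶜ : Finset (Fin N')), (μ ℓ (Set.Ico x y)).toReal := by
        rw [Finset.sum_subtype (p := fun ℓ : Fin N' => ¬ p ℓ) ({a, b}ᶜ : Finset (Fin N'))
          (by intro ℓ; rw [hp]; simp [not_or]) (fun ℓ => (μ ℓ (Set.Ico x y)).toReal)]
      rw [hsum]
      have h2 := hcond.2
      linarith
    · have : {f : (∀ _ : {i // ¬ p i}, ℝ) | x ≤ y ∧
          Set.ncard {i : {i // ¬ p i} | f i ∈ Set.Ico x y} ≤ lam ∧
          (11 * lam : ℝ) < ∑ ℓ ∈ ({a, b}ᶜ : Finset (Fin N')), (μ ℓ (Set.Ico x y)).toReal}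
          = ∅ := by
        ext f
        simp only [Set.mem_setOf_eq, Set.mem_empty_iff_false, iff_false]
        intro hf
        exact hcond ⟨hf.1, hf.2.2⟩
      rw [this]
      simp
  calc ∫⁻ g, (Measure.pi fun i : {i // ¬ p i} => μ i.1) (Prod.mk g ⁻¹' E₂)
        ∂(Measure.pi fun i : Subtype p => μ i.1)
      ≤ ∫⁻ _, B ∂(Measure.pi fun i : Subtype p => μ i.1) := lintegral_mono hslice
    _ = B := by rw [lintegral_const, measure_univ, mul_one]


lemma numeric_bound (n lam N : ℕ) (hn : 2 ≤ n) (hlam : lam = ⌈Real.logb 2 n⌉₊)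
    (hN : N = lam * n) :
    (N : ℝ) * N * (2 ^ lam * Real.exp (-(11 * lam) / 2)) ≤ ((n : ℝ) ^ 2)⁻¹ := by
  have hn0 : (0:ℝ) < n := by positivity
  have hn0' : (0:ℝ) < (n:ℝ) := by exact_mod_cast Nat.lt_of_lt_of_le Nat.zero_lt_two hn
  have hn2 : (n : ℝ) ≤ 2 ^ lam := by
    have h1 : Real.logb 2 n ≤ (lam : ℝ) := by
      rw [hlam]
      exact Nat.le_ceil _
    calc (n : ℝ) = 2 ^ Real.logb 2 n := (Real.rpow_logb (by norm_num) (by norm_num) hn0').symm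
      _ ≤ 2 ^ (lam : ℝ) := Real.rpow_le_rpow_of_exponent_le one_le_two h1
      _ = 2 ^ lam := Real.rpow_natCast 2 lam
  have hlam2 : (lam : ℝ) ≤ 2 ^ lam := by
    exact_mod_cast (Nat.lt_two_pow_self (n := lam)).le
  have hNle : (N : ℝ) ≤ 2 ^ lam * 2 ^ lam := by
    rw [hN]
    push_cast
    exact mul_le_mul hlam2 hn2 hn0.le (by positivity)
  have hexp : (128 : ℝ) ≤ Real.exp (11 / 2) := by
    have h1 : (2.7182818283 : ℝ) ^ (5:ℕ) ≤ Real.exp 1 ^ (5:ℕ) :=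
      pow_le_pow_left₀ (by norm_num) Real.exp_one_gt_d9.le 5
    have h2 : Real.exp 1 ^ (5:ℕ) = Real.exp 5 := by
      rw [← Real.exp_nat_mul]; norm_num
    have h3 : Real.exp 5 ≤ Real.exp (11 / 2) := Real.exp_le_exp.2 (by norm_num)
    nlinarith
  have hexp0 : (0:ℝ) < Real.exp (11/2) := Real.exp_pos _
  have he1 : Real.exp (-(11 * lam) / 2) = ((Real.exp (11/2))⁻¹) ^ lam := by
    rw [← Real.exp_neg, ← Real.exp_nat_mul]
    congr 1
    ring
  have key : ((n:ℝ) ^ 2) * ((N:ℝ) * N * (2 ^ lam * Real.exp (-(11 * lam) / 2))) ≤ 1 := by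
    have hpos : (0:ℝ) ≤ Real.exp (-(11 * lam) / 2) := (Real.exp_pos _).le
    have hNpos : (0:ℝ) ≤ (N:ℝ) := Nat.cast_nonneg N
    have step1 : ((n:ℝ) ^ 2) * ((N:ℝ) * N * (2 ^ lam * Real.exp (-(11 * lam) / 2)))
        ≤ (2 ^ lam) ^ 2 * ((2 ^ lam * 2 ^ lam) * (2 ^ lam * 2 ^ lam)
            * (2 ^ lam * Real.exp (-(11 * lam) / 2))) := by
      gcongr <;> positivity
    have step2 : ((2:ℝ) ^ lam) ^ 2 * ((2 ^ lam * 2 ^ lam) * (2 ^ lam * 2 ^ lam)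
            * (2 ^ lam * Real.exp (-(11 * lam) / 2)))
        = (128 : ℝ) ^ lam * ((Real.exp (11/2))⁻¹) ^ lam := by
      rw [he1, show (128:ℝ) ^ lam = ((2:ℝ) ^ lam) ^ (7:ℕ) by
        rw [show (128:ℝ) = 2 ^ (7:ℕ) by norm_num, ← pow_mul, mul_comm, pow_mul]]
      ring
    have step3 : (128 : ℝ) ^ lam * ((Real.exp (11/2))⁻¹) ^ lam
        ≤ (Real.exp (11/2)) ^ lam * ((Real.exp (11/2))⁻¹) ^ lam :=
      mul_le_mul_of_nonneg_right (pow_le_pow_left₀ (by norm_num) hexp lam) (by positivity)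
    have step4 : (Real.exp (11/2) : ℝ) ^ lam * ((Real.exp (11/2))⁻¹) ^ lam = 1 := by
      rw [← mul_pow, mul_inv_cancel₀ (ne_of_gt hexp0), one_pow]
    calc ((n:ℝ) ^ 2) * ((N:ℝ) * N * (2 ^ lam * Real.exp (-(11 * lam) / 2)))
        ≤ _ := step1
      _ = _ := step2
      _ ≤ _ := step3
      _ = 1 := step4
  rw [inv_eq_one_div, le_div_iff₀ (by positivity : (0:ℝ) < (n:ℝ) ^ 2)]
  linear_combination key

/-- With `λ = ⌈log₂ n⌉`, `N = λ·n`, and `N` independent samples `s₁, …, s_N` with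
`s_ℓ ∼ D_{i(ℓ)}` (`i(ℓ) = ((ℓ−1) mod n) + 1`), with probability at least `1 − n⁻²`:
for all distinct `a, b` with `s_a ≤ s_b`, if `[s_a, s_b)` contains at most `λ` of the
other sample points then `∑_{ℓ ∉ {a,b}} D_{i(ℓ)}([s_a, s_b)) ≤ 11·λ`. -/
theorem stmt5 (n : ℕ) (hn : 2 ≤ n) (lam N : ℕ) (hlam : lam = ⌈Real.logb 2 n⌉₊)
    (hN : N = lam * n) (D : Fin n → Measure ℝ) (hD : ∀ i, IsProbabilityMeasure (D i))
    (idx : Fin N → Fin n) (hidx : ∀ ℓ, (idx ℓ : ℕ) = (ℓ : ℕ) % n) :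
    1 - ((n : ℝ) ^ 2)⁻¹ ≤
      ((Measure.pi (fun ℓ => D (idx ℓ))) {ω | ∀ a b : Fin N, a ≠ b → ω a ≤ ω b →
        Set.ncard {ℓ : Fin N | ℓ ≠ a ∧ ℓ ≠ b ∧ ω ℓ ∈ Set.Ico (ω a) (ω b)} ≤ lam →
        ∑ ℓ ∈ ({a, b}ᶜ : Finset (Fin N)),
          (D (idx ℓ) (Set.Ico (ω a) (ω b))).toReal ≤ 11 * lam}).toReal := by
  classical
  haveI : ∀ ℓ : Fin N, IsProbabilityMeasure (D (idx ℓ)) := fun ℓ => hD (idx ℓ)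
  set μ : Fin N → Measure ℝ := fun ℓ => D (idx ℓ) with hμ
  set G : Set (Fin N → ℝ) := {ω | ∀ a b : Fin N, a ≠ b → ω a ≤ ω b →
      Set.ncard {ℓ : Fin N | ℓ ≠ a ∧ ℓ ≠ b ∧ ω ℓ ∈ Set.Ico (ω a) (ω b)} ≤ lam →
      ∑ ℓ ∈ ({a, b}ᶜ : Finset (Fin N)),
        (D (idx ℓ) (Set.Ico (ω a) (ω b))).toReal ≤ 11 * lam} with hG
  set E : Fin N × Fin N → Set (Fin N → ℝ) := fun q =>
    {ω : Fin N → ℝ | ω q.1 ≤ ω q.2 ∧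
      Set.ncard {ℓ : Fin N | ℓ ≠ q.1 ∧ ℓ ≠ q.2 ∧ ω ℓ ∈ Set.Ico (ω q.1) (ω q.2)} ≤ lam ∧
      (11 * lam : ℝ) < ∑ ℓ ∈ ({q.1, q.2}ᶜ : Finset (Fin N)),
        (μ ℓ (Set.Ico (ω q.1) (ω q.2))).toReal} with hE
  have hsub : Gᶜ ⊆ ⋃ q : Fin N × Fin N, E q := by
    intro ω hω
    simp only [hG, Set.mem_compl_iff, Set.mem_setOf_eq] at hω
    push_neg at hω
    obtain ⟨a, b, hab, hle, hcard, hsum⟩ := hω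
    exact Set.mem_iUnion.2 ⟨(a, b), hle, hcard, hsum⟩
  set B : ℝ≥0∞ := 2 ^ lam * ENNReal.ofReal (Real.exp (-(11 * lam) / 2)) with hB
  have hbad : Measure.pi μ Gᶜ ≤ (N * N : ℕ) * B := by
    calc Measure.pi μ Gᶜ ≤ Measure.pi μ (⋃ q : Fin N × Fin N, E q) := measure_mono hsub
      _ ≤ ∑' q : Fin N × Fin N, Measure.pi μ (E q) := measure_iUnion_le E
      _ = ∑ q : Fin N × Fin N, Measure.pi μ (E q) := tsum_fintype _
      _ ≤ ∑ _q : Fin N × Fin N, B :=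
          Finset.sum_le_sum fun q _ => pair_bound μ lam q.1 q.2
      _ = (N * N : ℕ) * B := by
          rw [Finset.sum_const, Finset.card_univ, Fintype.card_prod, Fintype.card_fin,
            nsmul_eq_mul]
  have hbad2 : Measure.pi μ Gᶜ ≤ ENNReal.ofReal (((n:ℝ) ^ 2)⁻¹) := by
    refine hbad.trans ?_
    have hN2 : ((N * N : ℕ) : ℝ≥0∞) = ENNReal.ofReal ((N:ℝ) * N) := by
      push_cast
      rw [ENNReal.ofReal_mul (by positivity)]
      simp [ENNReal.ofReal_natCast]
    have h2l : (2:ℝ≥0∞) ^ lam = ENNReal.ofReal ((2:ℝ) ^ lam) := by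
      rw [ENNReal.ofReal_pow (by norm_num), ENNReal.ofReal_ofNat]
    have : ((N * N : ℕ) : ℝ≥0∞) * B
        = ENNReal.ofReal ((N:ℝ) * N * (2 ^ lam * Real.exp (-(11 * lam) / 2))) := by
      rw [hB, hN2, h2l, ← ENNReal.ofReal_mul (by positivity),
        ← ENNReal.ofReal_mul (by positivity)]
    rw [this]
    exact ENNReal.ofReal_le_ofReal (numeric_bound n lam N hn hlam hN)
  have h1le : (1:ℝ≥0∞) ≤ Measure.pi μ G + Measure.pi μ Gᶜ := by
    have h := measure_union_le (μ := Measure.pi μ) G Gᶜ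
    rwa [Set.union_compl_self, measure_univ] at h
  have hofReal : ENNReal.ofReal (1 - ((n:ℝ) ^ 2)⁻¹) ≤ Measure.pi μ G := by
    rw [ENNReal.ofReal_sub _ (by positivity), ENNReal.ofReal_one]
    refine tsub_le_iff_right.2 ?_
    exact h1le.trans (add_le_add_right hbad2 _)
  have hne : Measure.pi μ G ≠ ⊤ := measure_ne_top _ _
  have hinv1 : ((n:ℝ) ^ 2)⁻¹ ≤ 1 := by
    rw [inv_le_one_iff₀]
    right
    have : (1:ℝ) ≤ (n:ℝ) := by exact_mod_cast Nat.one_le_of_lt hn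
    nlinarith
  have := ENNReal.toReal_mono hne hofReal
  rwa [ENNReal.toReal_ofReal (by linarith)] at this
end

section
/- Let n ≥ 1 and h ≥ 1 be integers with 2^h ≤ n!, and let c ≥ 1 be a real number. Let Φ be a family of partial codes, where each φ ∈ Φ consists of a domain D_φ ⊆ Sₙ (the set of permutations of {1, …, n}) and an injective function φ : D_φ → List Bool whose image is an antichain under the prefix order (for distinct π, π' ∈ D_φ, φ(π) is not a prefix of φ(π')). Suppose that for every subset Π ⊆ Sₙ with |Π| = 2^h there exists φ ∈ Φ with Π ⊆ D_φ and ∑_{π ∈ Π} |φ(π)| ≤ c·(n + h)·2^h. Then |Φ| ≥ (n!/2^h)^{2^h} / ( (n!)^{2^{h−1}} · 2^{c(n+h)·2^h} ). (This is the counting core of the lower bound showing that a self-improving sorter handling arbitrary distributions requires 2^{Ω(n log n)} bits of storage.) -/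
/-- A partial code on permutations: an injective, prefix-free (antichain) assignment of
Boolean transcripts to the permutations of a domain `dom ⊆ Sₙ`. It abstracts a
comparison tree for sorting: permutations are leaves and codewords are root-to-leaf
comparison transcripts. -/
structure PartialCode (n : ℕ) where
  dom : Finset (Equiv.Perm (Fin n))
  code : Equiv.Perm (Fin n) → List Bool
  inj : ∀ π ∈ dom, ∀ π' ∈ dom, code π = code π' → π = π'
  prefixFree : ∀ π ∈ dom, ∀ π' ∈ dom, code π <+: code π' → π = π'

/-- Unique decodability for an antichain code: equal-length lists of domain elements
with equal concatenated codes are equal. -/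
lemma PartialCode.decode_aux {n : ℕ} (φ : PartialCode n) :
    ∀ l1 l2 : List (Equiv.Perm (Fin n)), l1.length = l2.length →
      (∀ x ∈ l1, x ∈ φ.dom) → (∀ x ∈ l2, x ∈ φ.dom) →
      l1.flatMap φ.code = l2.flatMap φ.code → l1 = l2 := by
  intro l1
  induction l1 with
  | nil =>
    intro l2 hlen _ _ _
    exact (List.length_eq_zero_iff.mp hlen.symm).symm
  | cons a t ih =>
    intro l2 hlen h1 h2 hcat
    cases l2 with
    | nil => simp at hlen
    | cons b t2 =>
      rw [List.flatMap_cons, List.flatMap_cons] at hcat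
      have ha : a ∈ φ.dom := h1 a (by simp)
      have hb : b ∈ φ.dom := h2 b (by simp)
      have hpa : φ.code a <+: φ.code b ++ t2.flatMap φ.code := ⟨_, hcat⟩
      have hpb : φ.code b <+: φ.code b ++ t2.flatMap φ.code := List.prefix_append _ _
      have hab : a = b := by
        rcases le_total (φ.code a).length (φ.code b).length with hle | hle
        · exact φ.prefixFree a ha b hb (List.prefix_of_prefix_length_le hpa hpb hle)
        · exact (φ.prefixFree b hb a ha (List.prefix_of_prefix_length_le hpb hpa hle)).symm
      subst hab
      have ht : t.flatMap φ.code = t2.flatMap φ.code := by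
        exact List.append_cancel_left hcat
      have : t = t2 := ih t2 (by simpa using hlen) (fun x hx => h1 x (by simp [hx]))
        (fun x hx => h2 x (by simp [hx])) ht
      rw [this]

lemma sum_pow_two_lt (k : ℕ) : ∑ i ∈ Finset.range k, 2 ^ i < 2 ^ k := by
  induction k with
  | zero => simp
  | succ k ih =>
    rw [Finset.sum_range_succ, pow_succ]
    omega

lemma pow_le_choose' (N m : ℕ) (h : m ≤ N) : N ^ m ≤ N.choose m * m ^ m := by
  have key : N ^ m * m.factorial ≤ N.descFactorial m * m ^ m := by
    calc N ^ m * m.factorial = ∏ i ∈ Finset.range m, (N * (m - i)) := by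
          rw [Finset.prod_mul_distrib, Finset.prod_const, Finset.card_range,
            ← Nat.descFactorial_self, Nat.descFactorial_eq_prod_range]
      _ ≤ ∏ i ∈ Finset.range m, ((N - i) * m) := by
          apply Finset.prod_le_prod'
          intro i hi
          have hi' : i ≤ m := le_of_lt (Finset.mem_range.mp hi)
          calc N * (m - i) = m * N - i * N := by
                rw [mul_comm, Nat.sub_mul]
            _ ≤ N * m - i * m := by
                rw [mul_comm m N]
                exact Nat.sub_le_sub_left (Nat.mul_le_mul_left i h) _
            _ = (N - i) * m := (Nat.sub_mul _ _ _).symm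
      _ = N.descFactorial m * m ^ m := by
          rw [Finset.prod_mul_distrib, Finset.prod_const, Finset.card_range,
            Nat.descFactorial_eq_prod_range]
  rw [Nat.descFactorial_eq_factorial_mul_choose] at key
  have : N ^ m * m.factorial ≤ N.choose m * m ^ m * m.factorial := by
    calc N ^ m * m.factorial ≤ m.factorial * N.choose m * m ^ m := key
      _ = N.choose m * m ^ m * m.factorial := by ring
  exact Nat.le_of_mul_le_mul_right this m.factorial_pos

/-- The counting core of the `2^{Ω(n log n)}` storage lower bound for self-improving
sorters handling arbitrary distributions: if every set `Π` of `2^h` permutations is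
covered by some code in `Φ` with total transcript length at most `c(n+h)2^h`, then
`|Φ| ≥ (n!/2^h)^{2^h} / ((n!)^{2^{h−1}} · 2^{c(n+h)2^h})`. -/
theorem stmt8 (n h : ℕ) (hn : 1 ≤ n) (hh : 1 ≤ h) (hhn : 2 ^ h ≤ n.factorial)
    (c : ℝ) (hc : 1 ≤ c) (Φ : Finset (PartialCode n))
    (hcover : ∀ Pi : Finset (Equiv.Perm (Fin n)), Pi.card = 2 ^ h →
      ∃ φ ∈ Φ, Pi ⊆ φ.dom ∧
        (∑ π ∈ Pi, ((φ.code π).length : ℝ)) ≤ c * ((n : ℝ) + (h : ℝ)) * 2 ^ h) :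
    ((n.factorial : ℝ) / 2 ^ h) ^ (2 ^ h) /
        ((n.factorial : ℝ) ^ (2 ^ (h - 1)) *
          (2 : ℝ) ^ (c * ((n : ℝ) + (h : ℝ)) * 2 ^ h)) ≤ (Φ.card : ℝ) := by
  classical
  set m : ℕ := 2 ^ h with hm
  set N : ℕ := n.factorial with hN
  choose φsel hmem hsub hlen using hcover
  letI : LinearOrder (Equiv.Perm (Fin n)) :=
    LinearOrder.lift' (Fintype.equivFin _) (Equiv.injective _)
  set α : ℝ := c * ((n : ℝ) + (h : ℝ)) * 2 ^ h with hα
  have hc0 : (0 : ℝ) < c := lt_of_lt_of_le one_pos hc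
  have hα0 : (0 : ℝ) ≤ α := by
    apply mul_nonneg (mul_nonneg hc0.le (by positivity)) (by positivity)
  set K : ℕ := ⌊α⌋₊ with hK
  -- the finsets
  set S : Finset (Finset (Equiv.Perm (Fin n))) :=
    (Finset.univ : Finset (Equiv.Perm (Fin n))).powersetCard m with hS
  set E : ℕ → Finset (List Bool) :=
    fun j => Finset.image (fun f : Fin j → Bool => List.ofFn f) Finset.univ with hE
  set W : Finset (List Bool) := (Finset.range (K + 1)).biUnion E with hW
  -- default code
  set φ0 : PartialCode n :=
    ⟨∅, fun _ => [], fun π hπ => absurd hπ (Finset.notMem_empty π),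
      fun π hπ => absurd hπ (Finset.notMem_empty π)⟩ with hφ0
  set f : Finset (Equiv.Perm (Fin n)) → PartialCode n × List Bool :=
    fun Pi => if hPi : Pi.card = m then
      ⟨φsel Pi hPi, (Pi.sort (· ≤ ·)).flatMap (φsel Pi hPi).code⟩ else ⟨φ0, []⟩ with hf
  -- key cardinality bound
  have hcard : S.card ≤ (Φ ×ˢ W).card := by
    apply Finset.card_le_card_of_injOn f
    · -- maps to
      intro Pi hPi
      have hPic : Pi.card = m := by
        simpa using (Finset.mem_powersetCard.mp hPi).2
      rw [hf]
      simp only [dif_pos hPic]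
      rw [Finset.mem_coe, Finset.mem_product]
      refine ⟨hmem Pi hPic, ?_⟩
      -- the codeword has length ≤ K
      set w : List Bool := (Pi.sort (· ≤ ·)).flatMap (φsel Pi hPic).code with hw
      have hlw : w.length ≤ K := by
        have h1 : w.length = ∑ π ∈ Pi, ((φsel Pi hPic).code π).length := by
          rw [hw, List.length_flatMap]
          have hperm : List.Perm
              ((Pi.sort (· ≤ ·)).map (fun π => ((φsel Pi hPic).code π).length))
              (Pi.toList.map (fun π => ((φsel Pi hPic).code π).length)) :=
            (Finset.sort_perm_toList _ _).map _
          rw [hperm.sum_eq, Finset.sum_map_toList]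
        have h2 : ((∑ π ∈ Pi, ((φsel Pi hPic).code π).length : ℕ) : ℝ) ≤ α := by
          push_cast
          exact hlen Pi hPic
        rw [h1]
        exact Nat.le_floor (by exact_mod_cast h2)
      rw [Finset.mem_biUnion]
      refine ⟨w.length, Finset.mem_range.mpr (Nat.lt_succ_of_le hlw), ?_⟩
      rw [hE]
      apply Finset.mem_image.mpr
      exact ⟨fun i => w.get i, Finset.mem_univ _, List.ofFn_get w⟩
    · -- injective on S
      intro Pi hPi Pi' hPi' hfe
      have hPic : Pi.card = m := by simpa using (Finset.mem_powersetCard.mp hPi).2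
      have hPic' : Pi'.card = m := by simpa using (Finset.mem_powersetCard.mp hPi').2
      rw [hf] at hfe
      simp only [dif_pos hPic, dif_pos hPic', Prod.mk.injEq] at hfe
      obtain ⟨hφe, hwe⟩ := hfe
      have hsorteq : Pi.sort (· ≤ ·) = Pi'.sort (· ≤ ·) := by
        apply (φsel Pi hPic).decode_aux
        · rw [Finset.length_sort, Finset.length_sort, hPic, hPic']
        · intro x hx
          exact hsub Pi hPic ((Finset.mem_sort _).mp hx)
        · intro x hx
          have : x ∈ (φsel Pi' hPic').dom := hsub Pi' hPic' ((Finset.mem_sort _).mp hx)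
          rwa [← hφe] at this
        · rw [hwe, hφe]
      calc Pi = (Pi.sort (· ≤ ·)).toFinset := (Finset.sort_toFinset _ _).symm
        _ = (Pi'.sort (· ≤ ·)).toFinset := by rw [hsorteq]
        _ = Pi' := Finset.sort_toFinset _ _
  -- compute cardinalities
  have hScard : S.card = N.choose m := by
    rw [hS, Finset.card_powersetCard, Finset.card_univ, Fintype.card_perm, Fintype.card_fin]
  have hWcard : W.card ≤ 2 ^ (K + 1) := by
    calc W.card ≤ ∑ j ∈ Finset.range (K + 1), (E j).card := Finset.card_biUnion_le
      _ ≤ ∑ j ∈ Finset.range (K + 1), 2 ^ j := by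
          apply Finset.sum_le_sum
          intro j _
          calc (E j).card ≤ (Finset.univ : Finset (Fin j → Bool)).card :=
                Finset.card_image_le
            _ = 2 ^ j := by simp [Finset.card_univ]
      _ ≤ 2 ^ (K + 1) := (sum_pow_two_lt (K + 1)).le
  have hmain : N.choose m ≤ Φ.card * 2 ^ (K + 1) := by
    calc N.choose m = S.card := hScard.symm
      _ ≤ (Φ ×ˢ W).card := hcard
      _ = Φ.card * W.card := Finset.card_product _ _
      _ ≤ Φ.card * 2 ^ (K + 1) := Nat.mul_le_mul_left _ hWcard
  -- pass to the reals
  have hNm : m ≤ N := hhn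
  have hF1 : ((N : ℝ) / 2 ^ h) ^ m ≤ (N.choose m : ℝ) := by
    rw [div_pow, div_le_iff₀ (by positivity)]
    have hnat := pow_le_choose' N m hNm
    calc ((N : ℝ)) ^ m ≤ ((N.choose m * m ^ m : ℕ) : ℝ) := by exact_mod_cast hnat
      _ = (N.choose m : ℝ) * ((2 : ℝ) ^ h) ^ m := by
          push_cast [hm]
          ring
  have hF2 : (N.choose m : ℝ) ≤ (Φ.card : ℝ) * 2 ^ (K + 1) := by
    exact_mod_cast hmain
  have hF3 : ((2 : ℝ) ^ (K + 1) : ℝ) ≤ 2 * (2 : ℝ) ^ α := by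
    rw [pow_succ, mul_comm]
    apply mul_le_mul_of_nonneg_left _ (by norm_num)
    calc (2 : ℝ) ^ K = (2 : ℝ) ^ (K : ℝ) := (Real.rpow_natCast 2 K).symm
      _ ≤ (2 : ℝ) ^ α := Real.rpow_le_rpow_of_exponent_le one_le_two (Nat.floor_le hα0)
  have hN2 : (2 : ℝ) ≤ (N : ℝ) := by
    have : 2 ≤ N := le_trans (by
      calc 2 = 2 ^ 1 := (pow_one 2).symm
        _ ≤ 2 ^ h := Nat.pow_le_pow_right (by norm_num) hh) hhn
    exact_mod_cast this
  have hF4 : (2 : ℝ) ≤ (N : ℝ) ^ (2 ^ (h - 1)) := by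
    calc (2 : ℝ) ≤ (N : ℝ) := hN2
      _ ≤ (N : ℝ) ^ (2 ^ (h - 1)) :=
        le_self_pow₀ (le_trans one_le_two hN2) (by positivity)
  have hP0 : (0 : ℝ) < (2 : ℝ) ^ α := Real.rpow_pos_of_pos (by norm_num) α
  have hD0 : (0 : ℝ) < (N : ℝ) ^ (2 ^ (h - 1)) := lt_of_lt_of_le (by norm_num) hF4
  rw [div_le_iff₀ (by positivity)]
  have hΦ0 : (0 : ℝ) ≤ (Φ.card : ℝ) := Nat.cast_nonneg _
  calc ((N : ℝ) / 2 ^ h) ^ m ≤ (N.choose m : ℝ) := hF1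
    _ ≤ (Φ.card : ℝ) * 2 ^ (K + 1) := hF2
    _ ≤ (Φ.card : ℝ) * (2 * (2 : ℝ) ^ α) := mul_le_mul_of_nonneg_left hF3 hΦ0
    _ ≤ (Φ.card : ℝ) * ((N : ℝ) ^ (2 ^ (h - 1)) * (2 : ℝ) ^ α) := by
        apply mul_le_mul_of_nonneg_left _ hΦ0
        exact mul_le_mul_of_nonneg_right hF4 hP0.le
end

section
/- Fix an integer n ≥ 1 and a permutation σ of {1, …, n}. For a sequence x = (x₁, …, xₙ) with each xᵢ ∈ {1, …, n}, let π(x) denote the unique permutation of {1, …, n} such that the pairs (x_{π(x)(1)}, π(x)(1)), (x_{π(x)(2)}, π(x)(2)), …, (x_{π(x)(n)}, π(x)(n)) are strictly increasing in lexicographic order. Then the number of sequences x ∈ {1, …, n}ⁿ with π(x) = σ is at most 2^{2n−1}. -/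
/-- For a fixed permutation `σ`, the number of sequences `x ∈ {1, …, n}ⁿ` whose
lexicographic sorting permutation is `σ` (i.e. `j ↦ (x_{σ(j)}, σ(j))` is strictly
increasing in the lexicographic order) is at most `2^{2n−1}`. -/
theorem stmt9 (n : ℕ) (hn : 1 ≤ n) (σ : Equiv.Perm (Fin n)) :
    Set.ncard {x : Fin n → Fin n |
      StrictMono (fun j : Fin n => toLex (x (σ j), σ j))} ≤ 2 ^ (2 * n - 1) := by
  set S := {x : Fin n → Fin n |
      StrictMono (fun j : Fin n => toLex (x (σ j), σ j))}
  -- encode x as a strictly monotone function g x : Fin n → Fin (2n-1)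
  have hbound : ∀ (x : Fin n → Fin n) (j : Fin n), (x (σ j) : ℕ) + j < 2 * n - 1 := by
    intro x j
    have h1 : (x (σ j) : ℕ) < n := (x (σ j)).isLt
    have h2 : (j : ℕ) < n := j.isLt
    omega
  set g : (Fin n → Fin n) → Fin n → Fin (2 * n - 1) :=
    fun x j => ⟨(x (σ j) : ℕ) + j, hbound x j⟩ with hg
  have hmono : ∀ x ∈ S, StrictMono (g x) := by
    intro x hx j k hjk
    have h := hx hjk
    rw [Prod.Lex.lt_iff] at h
    have hle : (x (σ j) : ℕ) ≤ (x (σ k) : ℕ) := by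
      rcases h with h | ⟨h, _⟩
      · exact le_of_lt h
      · exact le_of_eq (congrArg Fin.val h)
    have : (j : ℕ) < k := hjk
    show ((x (σ j) : ℕ) + j) < ((x (σ k) : ℕ) + k)
    omega
  -- the map x ↦ image of g x is injective on S
  set F : (Fin n → Fin n) → Finset (Fin (2 * n - 1)) :=
    fun x => Finset.image (g x) Finset.univ with hF
  have hinj : Set.InjOn F S := by
    intro x hx y hy hxy
    have hcard : (F x).card = n := by
      rw [hF]
      rw [Finset.card_image_of_injective _ (hmono x hx).injective, Finset.card_univ,
        Fintype.card_fin]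
    have h1 : g x = (F x).orderEmbOfFin hcard :=
      Finset.orderEmbOfFin_unique hcard
        (fun i => Finset.mem_image_of_mem _ (Finset.mem_univ i)) (hmono x hx)
    have h2 : g y = (F x).orderEmbOfFin hcard := by
      refine Finset.orderEmbOfFin_unique hcard ?_ (hmono y hy)
      intro i
      rw [hxy]
      exact Finset.mem_image_of_mem _ (Finset.mem_univ i)
    have hgeq : g x = g y := h1.trans h2.symm
    funext i
    have := congrFun hgeq (σ.symm i)
    simp only [hg] at this
    have hval : (x (σ (σ.symm i)) : ℕ) + (σ.symm i : ℕ)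
        = (y (σ (σ.symm i)) : ℕ) + (σ.symm i : ℕ) := congrArg Fin.val this
    simp only [Equiv.apply_symm_apply] at hval
    exact Fin.ext (by omega)
  calc Set.ncard S ≤ (Set.univ : Set (Finset (Fin (2 * n - 1)))).ncard := by
        refine Set.ncard_le_ncard_of_injOn F (fun a _ => Set.mem_univ _) hinj ?_
        exact Set.finite_univ
    _ = 2 ^ (2 * n - 1) := by
        rw [Set.ncard_univ, Nat.card_eq_fintype_card, Fintype.card_finset, Fintype.card_fin]
end

section
/- Let n ≥ 1 and κ ≥ 2 be integers with κ even, and let E be a set of vectors in {1, …, n}ⁿ (i.e., E ⊆ (Fin n → Fin n)). Then the number of n-tuples (S₁, …, Sₙ), where each Sᵢ is a κ-element subset of {1, …, n}, for which there exists a matrix A ∈ {1, …, n}^{n×κ} such that the i-th row of A enumerates Sᵢ for every i (i.e., {A(i,1), …, A(i,κ)} = Sᵢ) and at least κ/2 of the columns of A belong to E, is at most |E|^{κ/2} · n^{κn/2}. -/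
/-- Counting product distributions with many easy projections: the number of `n`-tuples
`(S₁, …, Sₙ)` of `κ`-element subsets of `{1, …, n}` admitting a matrix
`A ∈ {1, …, n}^{n×κ}` whose `i`-th row enumerates `Sᵢ` and at least `κ/2` of whose
columns lie in `E` is at most `|E|^{κ/2} · n^{κn/2}`. -/
theorem stmt10 (n κ : ℕ) (hn : 1 ≤ n) (hκ : 2 ≤ κ) (hκeven : Even κ)
    (E : Set (Fin n → Fin n)) :
    Set.ncard {S : Fin n → Finset (Fin n) |
      (∀ i, (S i).card = κ) ∧
      ∃ A : Fin n → Fin κ → Fin n,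
        (∀ i, Finset.image (A i) Finset.univ = S i) ∧
        κ / 2 ≤ Set.ncard {j : Fin κ | (fun i => A i j) ∈ E}} ≤
      E.ncard ^ (κ / 2) * n ^ (κ * n / 2) := by
  classical
  obtain ⟨m, hm⟩ := hκeven
  have hκm : κ = 2 * m := by omega
  have hdiv : κ / 2 = m := by omega
  rw [hdiv]
  set g : ((Fin m → (Fin n → Fin n)) × (Fin m → (Fin n → Fin n))) → (Fin n → Finset (Fin n)) :=
    fun p i => (Finset.image (fun j => p.1 j i) Finset.univ) ∪
               (Finset.image (fun j => p.2 j i) Finset.univ) with hg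
  set D : Set ((Fin m → (Fin n → Fin n)) × (Fin m → (Fin n → Fin n))) :=
    {p | ∀ j, p.1 j ∈ E} with hD
  have hsub : {S : Fin n → Finset (Fin n) |
      (∀ i, (S i).card = κ) ∧
      ∃ A : Fin n → Fin κ → Fin n,
        (∀ i, Finset.image (A i) Finset.univ = S i) ∧
        m ≤ Set.ncard {j : Fin κ | (fun i => A i j) ∈ E}} ⊆ g '' D := by
    rintro S ⟨hScard, A, hArow, hAE⟩
    set J : Set (Fin κ) := {j : Fin κ | (fun i => A i j) ∈ E} with hJ
    have hJfin : J.Finite := Set.toFinite _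
    rw [Set.ncard_eq_toFinset_card J hJfin] at hAE
    obtain ⟨T, hTsub, hTcard⟩ := Finset.exists_subset_card_eq (s := hJfin.toFinset) hAE
    have hTc : Tᶜ.card = m := by
      rw [Finset.card_compl, hTcard]
      simp [hκm]
      omega
    set eT : Fin m ≃ T := (Finset.equivFinOfCardEq hTcard).symm
    set eC : Fin m ≃ ↥(Tᶜ) := (Finset.equivFinOfCardEq hTc).symm
    refine ⟨(fun j i => A i (eT j : Fin κ), fun j i => A i (eC j : Fin κ)), ?_, ?_⟩
    · intro j
      exact hJfin.mem_toFinset.mp (hTsub (eT j).2)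
    · funext i
      rw [hg]
      ext x
      simp only [Finset.mem_union, Finset.mem_image, Finset.mem_univ, true_and]
      rw [← hArow i]
      simp only [Finset.mem_image, Finset.mem_univ, true_and]
      constructor
      · rintro (⟨j, rfl⟩ | ⟨j, rfl⟩)
        · exact ⟨_, rfl⟩
        · exact ⟨_, rfl⟩
      · rintro ⟨k, rfl⟩
        by_cases hk : k ∈ T
        · exact Or.inl ⟨eT.symm ⟨k, hk⟩, by simp⟩
        · exact Or.inr ⟨eC.symm ⟨k, Finset.mem_compl.mpr hk⟩, by simp⟩
  calc Set.ncard _ ≤ (g '' D).ncard := Set.ncard_le_ncard hsub (Set.toFinite _)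
    _ ≤ D.ncard := Set.ncard_image_le (Set.toFinite _)
    _ = E.ncard ^ m * n ^ (κ * n / 2) := by
        have hDeq : D = (Set.univ.pi fun _ : Fin m => E) ×ˢ
            (Set.univ : Set (Fin m → Fin n → Fin n)) := by
          ext p
          simp [hD, Set.mem_prod, Set.mem_pi]
        have hmn : κ * n / 2 = n * m := by
          have h2 : κ * n = 2 * (n * m) := by rw [hκm]; ring
          omega
        rw [hDeq, ← Nat.card_coe_set_eq,
          Nat.card_congr ((Equiv.Set.prod _ _).trans
            (Equiv.prodCongr (Equiv.Set.univPi _) (Equiv.Set.univ _))),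
          Nat.card_prod, Nat.card_pi, Nat.card_pi, hmn]
        simp [Nat.card_coe_set_eq, Nat.card_eq_fintype_card, Finset.prod_const, pow_mul,
          Set.ncard_eq_toFinset_card', Set.toFinset_setOf]
end

section
/- Let V and I be finite sets of points in the Euclidean plane ℝ², let v ∈ V, and let t₁, t₂, t₃ ∈ ℝ². Let s be the convex hull of {t₁, t₂, t₃}, and suppose s is contained in the Voronoi region of v with respect to V, i.e., for every p ∈ s and every w ∈ V, dist(p, v) ≤ dist(p, w). Define Z = {v} ∪ {y ∈ I : dist(y, t_j) < dist(v, t_j) for some j ∈ {1, 2, 3}}. Then for every p ∈ s, the distance from p to the nearest point of V ∪ I equals the distance from p to the nearest point of Z: min_{y ∈ V ∪ I} dist(p, y) = min_{z ∈ Z} dist(p, z). (Hence the Voronoi diagram of V ∪ I restricted to s coincides with the Voronoi diagram of Z restricted to s.) -/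
open Classical

lemma bisector_convex {E : Type*} [NormedAddCommGroup E] [InnerProductSpace ℝ E]
    (v y : E) : Convex ℝ {p : E | dist p v ≤ dist p y} := by
  have h : {p : E | dist p v ≤ dist p y}
      = {p : E | inner ℝ p (y - v) ≤ (‖y‖ ^ 2 - ‖v‖ ^ 2) / 2} := by
    ext p
    simp only [Set.mem_setOf_eq]
    rw [dist_eq_norm, dist_eq_norm, inner_sub_right]
    constructor
    · intro hle
      have h2 := pow_le_pow_left₀ (norm_nonneg _) hle 2
      rw [norm_sub_sq_real, norm_sub_sq_real] at h2
      linarith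
    · intro hle
      have h2 : ‖p - v‖ ^ 2 ≤ ‖p - y‖ ^ 2 := by
        rw [norm_sub_sq_real, norm_sub_sq_real]; linarith
      nlinarith [norm_nonneg (p - v), norm_nonneg (p - y)]
  rw [h]
  exact convex_halfSpace_le ⟨fun a b => inner_add_left a b _,
    fun c x => real_inner_smul_left x _ c⟩ _

/-- The geode-triangle conflict-set claim: if the triangle `s = conv{t₁, t₂, t₃}` lies in
the Voronoi region of `v ∈ V`, and `Z` consists of `v` together with the points of `I`
lying in some open disk centered at a vertex `t_j` with radius `dist v t_j`, then for
every `p ∈ s` the nearest-point distance from `p` to `V ∪ I` equals that to `Z`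
(so `𝒱(V ∪ I) ∩ s = 𝒱(Z) ∩ s`). -/
theorem stmt12 (V I : Finset (EuclideanSpace ℝ (Fin 2))) (hV : V.Nonempty) (hI : I.Nonempty)
    (v : EuclideanSpace ℝ (Fin 2)) (hv : v ∈ V)
    (t : Fin 3 → EuclideanSpace ℝ (Fin 2))
    (hVor : ∀ p ∈ convexHull ℝ (Set.range t), ∀ w ∈ V, dist p v ≤ dist p w)
    (Z : Finset (EuclideanSpace ℝ (Fin 2)))
    (hZ : ∀ y, y ∈ Z ↔ y = v ∨ (y ∈ I ∧ ∃ j : Fin 3, dist y (t j) < dist v (t j)))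
    (hZne : Z.Nonempty) (hUne : (V ∪ I).Nonempty) :
    ∀ p ∈ convexHull ℝ (Set.range t),
      (V ∪ I).inf' hUne (fun y => dist p y) = Z.inf' hZne (fun z => dist p z) := by
  intro p hp
  have hvZ : v ∈ Z := (hZ v).mpr (Or.inl rfl)
  apply le_antisymm
  · apply Finset.le_inf'
    intro z hz
    have : z ∈ V ∪ I := by
      rcases (hZ z).mp hz with rfl | ⟨hzI, _⟩
      · exact Finset.mem_union_left _ hv
      · exact Finset.mem_union_right _ hzI
    exact Finset.inf'_le _ this
  · apply Finset.le_inf'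
    intro y hy
    rcases Finset.mem_union.mp hy with hyV | hyI
    · exact le_trans (Finset.inf'_le _ hvZ) (hVor p hp y hyV)
    · by_cases h : ∃ j : Fin 3, dist y (t j) < dist v (t j)
      · exact Finset.inf'_le _ ((hZ y).mpr (Or.inr ⟨hyI, h⟩))
      · push_neg at h
        have hsub : convexHull ℝ (Set.range t) ⊆ {q | dist q v ≤ dist q y} := by
          apply convexHull_min _ (bisector_convex v y)
          rintro x ⟨j, rfl⟩
          simp only [Set.mem_setOf_eq, dist_comm (t j)]
          exact h j
        exact le_trans (Finset.inf'_le _ hvZ) (hsub hp)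
end

section
/- Let Î be a finite set with |Î| = m, let λ be a positive integer, and let 𝓘 be a finite family of subsets of Î, each of cardinality exactly λ. Let G = (𝓘, E) be a simple graph on vertex set 𝓘 with |E| ≤ 24·|𝓘| edges, such that every edge {J₁, J₂} ∈ E satisfies |J₁ ∩ J₂| ≤ λ/100. For each p ∈ Î, let 𝓘_p = {J ∈ 𝓘 : p ∈ J} and let E_p be the set of edges of E with both endpoints in 𝓘_p, and suppose |E_p| ≥ |𝓘_p|/4 − 1 for every p ∈ Î. Then |𝓘| ≤ 100·m/λ. -/
open Classical

/-- The double-counting bound for the `(1/n)`-net construction: if `𝓘` is a family of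
`λ`-element subsets of an `m`-element set `Î`, `G` is a simple graph on `𝓘` with at most
`24·|𝓘|` edges, every edge joins sets with intersection of size at most `λ/100`, and for
every `p ∈ Î` the number of edges within `𝓘_p = {J ∈ 𝓘 : p ∈ J}` is at least
`|𝓘_p|/4 − 1`, then `|𝓘| ≤ 100·m/λ`. -/
theorem stmt13 {α : Type*} [Fintype α] [DecidableEq α] (m lam : ℕ)
    (hm : Fintype.card α = m) (hlam : 0 < lam)
    (𝓘 : Finset (Finset α)) (hcard : ∀ J ∈ 𝓘, J.card = lam)
    (G : SimpleGraph {J : Finset α // J ∈ 𝓘}) [Fintype G.edgeSet]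
    (hE : G.edgeFinset.card ≤ 24 * 𝓘.card)
    (hinter : ∀ J₁ J₂ : {J : Finset α // J ∈ 𝓘}, G.Adj J₁ J₂ →
      (((J₁ : Finset α) ∩ (J₂ : Finset α)).card : ℝ) ≤ (lam : ℝ) / 100)
    (hEp : ∀ p : α,
      (((𝓘.filter (fun J => p ∈ J)).card : ℝ) / 4 - 1 : ℝ) ≤
        ((G.edgeFinset.filter (fun e => ∀ J : {J : Finset α // J ∈ 𝓘}, J ∈ e → p ∈ (J : Finset α))).card : ℝ)) :
    (𝓘.card : ℝ) ≤ 100 * (m : ℝ) / (lam : ℝ) := by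
  classical
  set g : Sym2 {J : Finset α // J ∈ 𝓘} → ℕ :=
    Sym2.lift ⟨fun a b => ((a : Finset α) ∩ (b : Finset α)).card,
      fun a b => by dsimp only; rw [Finset.inter_comm]⟩ with hg
  have hgmk : ∀ a b : {J : Finset α // J ∈ 𝓘},
      g s(a, b) = ((a : Finset α) ∩ (b : Finset α)).card := by
    intro a b; rw [hg]; rfl
  -- identity 1
  have h1 : ∑ p : α, (𝓘.filter (fun J => p ∈ J)).card = lam * 𝓘.card := by
    have e1 : ∑ p : α, (𝓘.filter (fun J => p ∈ J)).card
        = ∑ p : α, ∑ J ∈ 𝓘, if p ∈ J then 1 else 0 := by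
      simp only [Finset.card_filter]
    rw [e1, Finset.sum_comm]
    have e2 : ∀ J ∈ 𝓘, (∑ p : α, if p ∈ J then 1 else 0) = lam := by
      intro J hJ
      rw [← Finset.card_filter]
      rw [Finset.filter_mem_eq_inter, Finset.univ_inter, hcard J hJ]
    rw [Finset.sum_congr rfl e2, Finset.sum_const, smul_eq_mul, mul_comm]
  -- identity 2
  have h2 : ∑ p : α,
      (G.edgeFinset.filter (fun e => ∀ J : {J : Finset α // J ∈ 𝓘}, J ∈ e → p ∈ (J : Finset α))).card
      = ∑ e ∈ G.edgeFinset, g e := by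
    have e1 : ∑ p : α,
        (G.edgeFinset.filter (fun e => ∀ J : {J : Finset α // J ∈ 𝓘}, J ∈ e → p ∈ (J : Finset α))).card
        = ∑ p : α, ∑ e ∈ G.edgeFinset,
            if ∀ J : {J : Finset α // J ∈ 𝓘}, J ∈ e → p ∈ (J : Finset α) then 1 else 0 := by
      simp only [Finset.card_filter]
    rw [e1, Finset.sum_comm]
    refine Finset.sum_congr rfl ?_
    intro e he
    induction e using Sym2.ind with
    | _ a b =>
      rw [← Finset.card_filter, hgmk]
      congr 1
      ext p
      simp only [Finset.mem_filter, Finset.mem_univ, true_and, Finset.mem_inter]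
      constructor
      · intro h
        exact ⟨h a (Sym2.mem_mk_left a b), h b (Sym2.mem_mk_right a b)⟩
      · rintro ⟨ha, hb⟩ J hJ
        rcases Sym2.mem_iff.mp hJ with h | h <;> subst h <;> assumption
  -- bound on sum of g
  have h3 : (∑ e ∈ G.edgeFinset, (g e : ℝ)) ≤ (lam : ℝ) / 100 * G.edgeFinset.card := by
    calc (∑ e ∈ G.edgeFinset, (g e : ℝ)) ≤ ∑ _e ∈ G.edgeFinset, (lam : ℝ) / 100 := by
          refine Finset.sum_le_sum ?_
          intro e he
          induction e using Sym2.ind with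
          | _ a b =>
            have hadj : G.Adj a b := SimpleGraph.mem_edgeFinset.mp he
            rw [hgmk]
            exact_mod_cast hinter a b hadj
      _ = (lam : ℝ) / 100 * G.edgeFinset.card := by
          rw [Finset.sum_const, nsmul_eq_mul, mul_comm]
  -- sum hEp
  have h4 : (lam : ℝ) * 𝓘.card / 4 - m ≤ (lam : ℝ) / 100 * (24 * 𝓘.card) := by
    have hsum : ∑ p : α, ((((𝓘.filter (fun J => p ∈ J)).card : ℝ)) / 4 - 1)
        ≤ ∑ p : α, ((G.edgeFinset.filter (fun e => ∀ J : {J : Finset α // J ∈ 𝓘}, J ∈ e → p ∈ (J : Finset α))).card : ℝ) :=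
      Finset.sum_le_sum fun p _ => hEp p
    have lhs : ∑ p : α, ((((𝓘.filter (fun J => p ∈ J)).card : ℝ)) / 4 - 1)
        = (lam : ℝ) * 𝓘.card / 4 - m := by
      rw [Finset.sum_sub_distrib]
      simp only [Finset.sum_const, Finset.card_univ, hm, nsmul_eq_mul, mul_one]
      congr 1
      rw [← Finset.sum_div]
      congr 1
      rw [← Nat.cast_sum, h1]
      push_cast
      ring
    have rhs : ∑ p : α, ((G.edgeFinset.filter (fun e => ∀ J : {J : Finset α // J ∈ 𝓘}, J ∈ e → p ∈ (J : Finset α))).card : ℝ)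
        = ∑ e ∈ G.edgeFinset, (g e : ℝ) := by
      rw [← Nat.cast_sum, h2, Nat.cast_sum]
    rw [lhs, rhs] at hsum
    refine hsum.trans (h3.trans ?_)
    have hcardE : (G.edgeFinset.card : ℝ) ≤ 24 * 𝓘.card := by exact_mod_cast hE
    have hl : (0:ℝ) ≤ (lam : ℝ) / 100 := by positivity
    nlinarith
  -- conclude
  have hlamR : (0:ℝ) < lam := by exact_mod_cast hlam
  rw [le_div_iff₀ hlamR]
  nlinarith [h4]
end

section
/- Let T be a finite set, let p : T → [0, 1] with ∑_{t ∈ T} p(t) = 1, let s : T → ℝ with s(t) ≥ 0 for all t, let n ≥ 2 be an integer, let ε ∈ (0, 1), and let a ≥ 0. Suppose that (i) s(t) ≤ a·log₂ n for every t ∈ T, and (ii) s(t) ≤ a·(1 + log₂(1/p(t))) for every t ∈ T with p(t) > n^{−ε/3}. Then ∑_{t ∈ T} p(t)·s(t) ≤ 4a·(1 + ε⁻¹·H), where H = ∑_{t ∈ T, p(t) > 0} p(t)·log₂(1/p(t)). (This is the computation showing that searching with the pruned, empirically learned search structures—falling back to a balanced structure with O(log n) search time when the pruned structure fails—has expected cost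 O(1 + ε⁻¹·H).) -/
/-- The pruned-search-structure cost computation: if every cell's search time satisfies
`s(t) ≤ a·log₂ n`, and `s(t) ≤ a·(1 + log₂(1/p(t)))` whenever `p(t) > n^{−ε/3}`, then the
expected search time is at most `4a·(1 + ε⁻¹·H)`, where
`H = ∑_{p(t) > 0} p(t)·log₂(1/p(t))` is the entropy of the probability vector `p`. -/
theorem stmt14 {T : Type*} [Fintype T] (p : T → ℝ) (hp0 : ∀ t, 0 ≤ p t)
    (hp1 : ∑ t, p t = 1) (s : T → ℝ) (hs0 : ∀ t, 0 ≤ s t)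
    (n : ℕ) (hn : 2 ≤ n) (ε : ℝ) (hε : ε ∈ Set.Ioo (0 : ℝ) 1) (a : ℝ) (ha : 0 ≤ a)
    (h1 : ∀ t, s t ≤ a * Real.logb 2 n)
    (h2 : ∀ t, (n : ℝ) ^ (-(ε / 3)) < p t → s t ≤ a * (1 + Real.logb 2 (1 / p t))) :
    ∑ t, p t * s t ≤
      4 * a * (1 + ε⁻¹ * ∑ t ∈ Finset.univ.filter (fun t => 0 < p t),
        p t * Real.logb 2 (1 / p t)) := by
  obtain ⟨hε0, hε1⟩ := hε
  have hn0 : (0:ℝ) < n := by positivity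
  have hn1 : (1:ℝ) < n := by exact_mod_cast hn
  set H := ∑ t ∈ Finset.univ.filter (fun t => 0 < p t), p t * Real.logb 2 (1 / p t) with hH
  have hple : ∀ t, p t ≤ 1 := fun t => by
    calc p t ≤ ∑ t, p t := Finset.single_le_sum (fun i _ => hp0 i) (Finset.mem_univ t)
    _ = 1 := hp1
  have hterm : ∀ t, 0 < p t → 0 ≤ p t * Real.logb 2 (1 / p t) := fun t ht => by
    apply mul_nonneg ht.le
    apply Real.logb_nonneg one_lt_two
    rw [le_div_iff₀ ht]; simpa using hple t
  have hHnn : 0 ≤ H := Finset.sum_nonneg fun t ht =>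
    hterm t (by simpa using (Finset.mem_filter.mp ht).2)
  set L := Finset.univ.filter (fun t => (n:ℝ) ^ (-(ε/3)) < p t) with hL
  set Sc := Finset.univ.filter (fun t => ¬ ((n:ℝ) ^ (-(ε/3)) < p t)) with hSc
  have hsplit : ∑ t, p t * s t = ∑ t ∈ L, p t * s t + ∑ t ∈ Sc, p t * s t :=
    (Finset.sum_filter_add_sum_filter_not Finset.univ _ (fun t => p t * s t)).symm
  have hLsub : L ⊆ Finset.univ.filter (fun t => 0 < p t) := by
    intro t ht
    simp only [hL, Finset.mem_filter] at ht ⊢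
    exact ⟨ht.1, lt_trans (Real.rpow_pos_of_pos hn0 _) ht.2⟩
  -- bound on L
  have hb1 : ∑ t ∈ L, p t * s t ≤ a * 1 + a * H := by
    calc ∑ t ∈ L, p t * s t ≤ ∑ t ∈ L, (a * p t + a * (p t * Real.logb 2 (1 / p t))) := by
          apply Finset.sum_le_sum
          intro t ht
          have h := h2 t (Finset.mem_filter.mp ht).2
          nlinarith [mul_le_mul_of_nonneg_left h (hp0 t)]
      _ = a * ∑ t ∈ L, p t + a * ∑ t ∈ L, p t * Real.logb 2 (1 / p t) := by
          rw [Finset.sum_add_distrib, Finset.mul_sum, Finset.mul_sum]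
      _ ≤ a * 1 + a * H := by
          gcongr
          · calc ∑ t ∈ L, p t ≤ ∑ t, p t :=
                Finset.sum_le_sum_of_subset_of_nonneg (Finset.subset_univ _)
                  (fun t _ _ => hp0 t)
              _ = 1 := hp1
          · exact Finset.sum_le_sum_of_subset_of_nonneg hLsub
              (fun t ht _ => hterm t (by simpa using (Finset.mem_filter.mp ht).2))
  -- bound on Sc
  have hb2 : ∑ t ∈ Sc, p t * s t ≤ 3 * a * ε⁻¹ * H := by
    calc ∑ t ∈ Sc, p t * s t
        ≤ ∑ t ∈ Sc, 3 * a * ε⁻¹ * (p t * Real.logb 2 (1 / p t)) := by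
          apply Finset.sum_le_sum
          intro t ht
          rcases eq_or_lt_of_le (hp0 t) with hpt | hpt
          · simp [← hpt]
          · have hle : p t ≤ (n:ℝ) ^ (-(ε/3)) := le_of_not_gt (Finset.mem_filter.mp ht).2
            have hlog : (ε/3) * Real.logb 2 n ≤ Real.logb 2 (1 / p t) := by
              have h1p : (n:ℝ) ^ (ε/3) ≤ 1 / p t := by
                rw [le_div_iff₀ hpt]
                calc (n:ℝ) ^ (ε/3) * p t ≤ (n:ℝ) ^ (ε/3) * (n:ℝ) ^ (-(ε/3)) :=
                      mul_le_mul_of_nonneg_left hle (Real.rpow_pos_of_pos hn0 _).le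
                  _ = 1 := by rw [← Real.rpow_add hn0]; simp
              calc (ε/3) * Real.logb 2 n = Real.logb 2 ((n:ℝ) ^ (ε/3)) := by
                    rw [Real.logb_rpow_eq_mul_logb_of_pos hn0]
                _ ≤ Real.logb 2 (1 / p t) :=
                    Real.logb_le_logb_of_le one_lt_two (Real.rpow_pos_of_pos hn0 _) h1p
            have hst := h1 t
            have hεinv : 1 ≤ ε⁻¹ := (one_le_inv₀ hε0).mpr hε1.le
            have hεpos : 0 < ε⁻¹ := inv_pos.mpr hε0
            -- p t * s t ≤ p t * a * logb 2 n ≤ 3 a ε⁻¹ * (p t * logb 2 (1/p t))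
            have key : a * Real.logb 2 n ≤ 3 * a * ε⁻¹ * Real.logb 2 (1 / p t) := by
              have h3 : a * Real.logb 2 n = 3 * a * ε⁻¹ * ((ε/3) * Real.logb 2 n) := by
                field_simp
              rw [h3]
              exact mul_le_mul_of_nonneg_left hlog (by positivity)
            calc p t * s t ≤ p t * (a * Real.logb 2 n) :=
                  mul_le_mul_of_nonneg_left hst hpt.le
              _ ≤ p t * (3 * a * ε⁻¹ * Real.logb 2 (1 / p t)) :=
                  mul_le_mul_of_nonneg_left key hpt.le
              _ = 3 * a * ε⁻¹ * (p t * Real.logb 2 (1 / p t)) := by ring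
      _ = 3 * a * ε⁻¹ * ∑ t ∈ Sc, p t * Real.logb 2 (1 / p t) := by
          rw [Finset.mul_sum]
      _ ≤ 3 * a * ε⁻¹ * H := by
          apply mul_le_mul_of_nonneg_left _ (by positivity)
          rw [hH]
          rw [show ∑ t ∈ Sc, p t * Real.logb 2 (1 / p t)
              = ∑ t ∈ Sc.filter (fun t => 0 < p t), p t * Real.logb 2 (1 / p t) from
            (Finset.sum_filter_of_ne fun t _ hne => by
              rcases eq_or_lt_of_le (hp0 t) with h | h
              · exact absurd (by simp [← h]) hne
              · exact h).symm]
          apply Finset.sum_le_sum_of_subset_of_nonneg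
          · intro t ht
            simp only [Finset.mem_filter] at ht ⊢
            exact ⟨Finset.mem_univ t, ht.2⟩
          · intro t ht _
            exact hterm t (by simpa using (Finset.mem_filter.mp ht).2)
  have hεinv : 1 ≤ ε⁻¹ := (one_le_inv₀ hε0).mpr hε1.le
  rw [hsplit]
  have hx : 0 ≤ a * H * (ε⁻¹ - 1) := by
    apply mul_nonneg (mul_nonneg ha hHnn); linarith
  nlinarith [mul_nonneg (mul_nonneg ha hHnn) (le_of_lt (inv_pos.mpr hε0))]
end
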